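/- arXiv:0803.0379 — 10 statements merged into one kernel-verified Lean document; each statement's English description precedes it below -/
import Mathlib

section
/- A countable group G equipped with a proper left invariant metric d_G is finitely generated if and only if (G, d_G) is large scale connected, i.e. there exists s > 0 such that any two elements of G are connected by an s-scale chain. -/
/-- `d` is a proper left invariant metric on the group `G`. -/
def IsProperLeftInvMetric {G : Type*} [Group G] (d : G → G → ℝ) : Prop :=
  (∀ x y, 0 ≤ d x y) ∧ (∀ x y, d x y = 0 ↔ x = y) ∧ (∀ x y, d x y = d y x) ∧
  (∀ x y z, d x z ≤ d x y + d y z) ∧ (∀ g h₁ h₂, d (g * h₁) (g * h₂) = d h₁ h₂) ∧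
  (∀ (x : G) (K : ℝ), {y : G | d x y ≤ K}.Finite)

/-- A countable group with a proper left invariant metric is finitely generated iff it is
large scale connected. -/
theorem stmt1 {G : Type*} [Group G] [Countable G] (d : G → G → ℝ)
    (hd : IsProperLeftInvMetric d) :
    Group.FG G ↔ ∃ s : ℝ, 0 < s ∧
      ∀ x y : G, Relation.ReflTransGen (fun a b => d a b ≤ s) x y := by
  obtain ⟨hpos, hzero, hsymm, htri, hinv, hprop⟩ := hd
  constructor
  · rintro ⟨S, hS⟩
    set s : ℝ := (insert (1 : ℝ) (S.image (d 1))).max' ⟨1, Finset.mem_insert_self _ _⟩ with hs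
    have hs1 : (1 : ℝ) ≤ s := Finset.le_max' _ _ (Finset.mem_insert_self _ _)
    have hsS : ∀ g ∈ S, d 1 g ≤ s := fun g hg =>
      Finset.le_max' _ _ (Finset.mem_insert_of_mem (Finset.mem_image_of_mem _ hg))
    refine ⟨s, lt_of_lt_of_le one_pos hs1, ?_⟩
    set R : G → G → Prop := fun a b => d a b ≤ s with hR
    have hRsymm : Symmetric R := fun a b h => by simpa [hR, hsymm a b] using h
    have htrans : ∀ (g x y : G), Relation.ReflTransGen R x y →
        Relation.ReflTransGen R (g * x) (g * y) := by
      intro g x y h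
      exact Relation.ReflTransGen.lift (r := R) (p := R) (fun z => g * z)
        (show ∀ a b, R a b → R (g * a) (g * b) from fun a b hab => by
        simpa [hR, hinv] using hab) _ _ h
    have key : ∀ x : G, Relation.ReflTransGen R 1 x := by
      intro x
      have hx : x ∈ Subgroup.closure (S : Set G) := hS ▸ Subgroup.mem_top x
      induction hx using Subgroup.closure_induction with
      | mem g hg => exact Relation.ReflTransGen.single (hsS g hg)
      | one => exact Relation.ReflTransGen.refl
      | mul a b _ _ ha hb =>
          refine ha.trans ?_
          simpa using htrans a 1 b hb
      | inv a _ ha =>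
          have h2 := htrans a⁻¹ 1 a ha
          have h3 : Relation.ReflTransGen R a⁻¹ 1 := by simpa using h2
          haveI : Std.Symm R := ⟨hRsymm⟩
          exact Std.Symm.symm _ _ h3
    intro x y
    have := htrans x 1 (x⁻¹ * y) (key (x⁻¹ * y))
    simpa using this
  · rintro ⟨s, hs, hconn⟩
    set S : Set G := {y : G | d 1 y ≤ s} with hSdef
    have hSfin : S.Finite := hprop 1 s
    refine ⟨⟨hSfin.toFinset, ?_⟩⟩
    rw [eq_top_iff]
    intro x _
    have h1 : (1 : G) ∈ Subgroup.closure (hSfin.toFinset : Set G) := one_mem _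
    have hchain := hconn 1 x
    induction hchain with
    | refl => exact h1
    | @tail b c _ hbc ih =>
        have hmem : b⁻¹ * c ∈ S := by
          have : d 1 (b⁻¹ * c) = d b c := by
            have := hinv b⁻¹ b c
            simpa using this
          simpa [hSdef, this] using hbc
        have : b⁻¹ * c ∈ Subgroup.closure (hSfin.toFinset : Set G) :=
          Subgroup.subset_closure (by simpa using hmem)
        simpa using mul_mem (ih (Subgroup.mem_top b)) this
end

section
/- Let G be a countable locally finite group with a one-step ascending chain {1} = G₀ < G₁ < G₂ < ... (with G = ⋃ Gᵢ, each Gᵢ finite) and let (Kᵢ) be a strictly increasing sequence of positive reals tending to infinity. Then the function d(x,y) = Kᵢ where i is the unique index with x⁻¹y ∈ Gᵢ \ Gᵢ₋₁ (and d(x,y) = 0 if x = y) is a proper left invariant ultrametric on G. -/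
/-- The ultrametric generated by a one-step ascending chain of a locally finite group and a
strictly increasing unbounded sequence of positive reals is a proper left invariant
ultrametric. -/
theorem stmt2 {G : Type*} [Group G] [Countable G]
    (c : ℕ → Subgroup G) (g : ℕ → G)
    (hc0 : c 0 = ⊥)
    (hgen : ∀ i, c (i + 1) = Subgroup.closure (g '' {j | j < i + 1}))
    (hnot : ∀ i, g i ∉ c i)
    (hfin : ∀ i, ((c i : Set G)).Finite)
    (hunion : (⨆ i, c i) = ⊤)
    (K : ℕ → ℝ) (hKpos : ∀ i, 0 < K i) (hKmono : StrictMono K)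
    (hKtop : Filter.Tendsto K Filter.atTop Filter.atTop)
    (d : G → G → ℝ)
    (hdiag : ∀ x, d x x = 0)
    (hdval : ∀ x y i, x⁻¹ * y ∈ c (i + 1) → x⁻¹ * y ∉ c i → d x y = K (i + 1)) :
    IsProperLeftInvMetric d ∧ ∀ x y z, d x z ≤ max (d x y) (d y z) := by
  classical
  have hmono : Monotone c := by
    apply monotone_nat_of_le_succ
    intro i
    match i with
    | 0 => rw [hc0]; exact bot_le
    | j + 1 =>
      rw [hgen j, hgen (j + 1)]
      exact Subgroup.closure_mono (Set.image_mono (fun k hk => Nat.lt_succ_of_lt hk))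
  have hexists : ∀ a : G, ∃ i, a ∈ c i := by
    intro a
    have : a ∈ ⨆ i, c i := hunion ▸ Subgroup.mem_top a
    exact (Subgroup.mem_iSup_of_directed hmono.directed_le).mp this
  have key : ∀ a : G, a ≠ 1 → ∃ n, a ∈ c (n + 1) ∧ a ∉ c n := by
    intro a ha
    have hP : ∃ i, a ∈ c i := hexists a
    have hmem : a ∈ c (Nat.find hP) := Nat.find_spec hP
    have hpos : Nat.find hP ≠ 0 := by
      intro h
      rw [h, hc0] at hmem
      exact ha (Subgroup.mem_bot.mp hmem)
    obtain ⟨m, hm⟩ := Nat.exists_eq_succ_of_ne_zero hpos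
    refine ⟨m, ?_, ?_⟩
    · rw [Nat.succ_eq_add_one] at hm; rw [← hm]; exact hmem
    · exact Nat.find_min hP (by omega)
  -- key facts about d
  have dpos : ∀ x y : G, x ≠ y → ∃ n, x⁻¹ * y ∈ c (n + 1) ∧ x⁻¹ * y ∉ c n ∧ d x y = K (n + 1) := by
    intro x y hxy
    have ha : x⁻¹ * y ≠ 1 := by
      intro h
      exact hxy (by
        have := congrArg (x * ·) h
        simpa using this.symm)
    obtain ⟨n, h1, h2⟩ := key _ ha
    exact ⟨n, h1, h2, hdval x y n h1 h2⟩
  have nonneg : ∀ x y : G, 0 ≤ d x y := by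
    intro x y
    by_cases h : x = y
    · rw [h, hdiag]
    · obtain ⟨n, _, _, hd⟩ := dpos x y h
      rw [hd]; exact (hKpos _).le
  have zeroiff : ∀ x y : G, d x y = 0 ↔ x = y := by
    intro x y
    constructor
    · intro h
      by_contra hxy
      obtain ⟨n, _, _, hd⟩ := dpos x y hxy
      rw [hd] at h
      exact (hKpos (n + 1)).ne' h
    · intro h; rw [h, hdiag]
  have symm : ∀ x y : G, d x y = d y x := by
    intro x y
    by_cases h : x = y
    · rw [h]
    · obtain ⟨n, h1, h2, hd⟩ := dpos x y h
      have e : y⁻¹ * x = (x⁻¹ * y)⁻¹ := by group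
      have h1' : y⁻¹ * x ∈ c (n + 1) := by rw [e]; exact inv_mem h1
      have h2' : y⁻¹ * x ∉ c n := by
        rw [e]; intro hh; exact h2 ((inv_mem_iff).mp hh)
      rw [hd, hdval y x n h1' h2']
  have ultra : ∀ x y z : G, d x z ≤ max (d x y) (d y z) := by
    intro x y z
    by_cases hxz : x = z
    · rw [hxz, hdiag]
      exact le_max_of_le_left (nonneg z y)
    by_cases hxy : x = y
    · rw [hxy]; exact le_max_right _ _
    by_cases hyz : y = z
    · rw [← hyz]; exact le_max_left _ _
    obtain ⟨n, hn1, hn2, hdn⟩ := dpos x z hxz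
    obtain ⟨p, hp1, _, hdp⟩ := dpos x y hxy
    obtain ⟨q, hq1, _, hdq⟩ := dpos y z hyz
    have hprod : x⁻¹ * z ∈ c (max p q + 1) := by
      have e : x⁻¹ * z = (x⁻¹ * y) * (y⁻¹ * z) := by group
      rw [e]
      exact mul_mem (hmono (by omega : p + 1 ≤ max p q + 1) hp1)
        (hmono (by omega : q + 1 ≤ max p q + 1) hq1)
    have hle : n + 1 ≤ max p q + 1 := by
      by_contra hlt
      exact hn2 (hmono (by omega : max p q + 1 ≤ n) hprod)
    rw [hdn, hdp, hdq]
    calc K (n + 1) ≤ K (max p q + 1) := hKmono.monotone hle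
      _ = max (K (p + 1)) (K (q + 1)) := by
          rw [← hKmono.monotone.map_max]
          congr 1
          omega
  refine ⟨⟨nonneg, zeroiff, symm, ?_, ?_, ?_⟩, ultra⟩
  · intro x y z
    refine (ultra x y z).trans (max_le ?_ ?_)
    · exact le_add_of_nonneg_right (nonneg y z)
    · exact le_add_of_nonneg_left (nonneg x y)
  · intro a h₁ h₂
    by_cases h : h₁ = h₂
    · rw [h, hdiag, hdiag]
    · obtain ⟨n, hn1, hn2, hd⟩ := dpos h₁ h₂ h
      have e : (a * h₁)⁻¹ * (a * h₂) = h₁⁻¹ * h₂ := by group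
      have hne : a * h₁ ≠ a * h₂ := by
        intro hh; exact h (mul_left_cancel hh)
      rw [hd, hdval (a * h₁) (a * h₂) n (by rw [e]; exact hn1) (by rw [e]; exact hn2)]
  · intro x K₀
    obtain ⟨N, hN⟩ := (hKtop.eventually_gt_atTop K₀).exists
    apply Set.Finite.subset (((hfin N).image (fun a => x * a)))
    intro y hy
    simp only [Set.mem_setOf_eq] at hy
    by_cases h : x = y
    · exact ⟨1, Subgroup.one_mem _, by show x * 1 = y; rw [mul_one, h]⟩
    · obtain ⟨n, h1, _, hd⟩ := dpos x y h
      rw [hd] at hy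
      have : n + 1 ≤ N := by
        by_contra hh
        have := hKmono.monotone (by omega : N ≤ n + 1)
        linarith
      exact ⟨x⁻¹ * y, hmono this h1, by show x * (x⁻¹ * y) = y; group⟩
end

section
/- Every countable locally finite abelian group G admits a one-step ascending chain {1} = G₀ < G₁ < G₂ < ... (union equal to G) such that every index [Gᵢ₊₁ : Gᵢ] is a prime number. -/
open scoped Classical

open Subgroup

/-- The next generator: the first enumerated element outside `H`, raised to a power
making its image in `G ⧸ H` of prime order. -/
noncomputable def nxt {G : Type*} [CommGroup G] (e : ℕ → G) (H : Subgroup G) : G :=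
  if h : ∃ j, e j ∉ H then
    (e (Nat.find h)) ^
      (orderOf ((e (Nat.find h) : G) : G ⧸ H) /
        (orderOf ((e (Nat.find h) : G) : G ⧸ H)).minFac)
  else 1

noncomputable def chn {G : Type*} [CommGroup G] (e : ℕ → G) : ℕ → Subgroup G × G
  | 0 => (⊥, nxt e ⊥)
  | i + 1 =>
      ((chn e i).1 ⊔ Subgroup.zpowers (chn e i).2,
        nxt e ((chn e i).1 ⊔ Subgroup.zpowers (chn e i).2))

section aux

variable {G : Type*} [CommGroup G]

lemma nxt_eq (e : ℕ → G) (H : Subgroup G) (h : ∃ j, e j ∉ H) :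
    nxt e H = (e (Nat.find h)) ^
      (orderOf ((e (Nat.find h) : G) : G ⧸ H) /
        (orderOf ((e (Nat.find h) : G) : G ⧸ H)).minFac) := by
  rw [nxt, dif_pos h]

lemma step_lemma (e : ℕ → G) (H : Subgroup G)
    (hfin : ∀ x : G, orderOf x ≠ 0) (hex : ∃ j, e j ∉ H) :
    nxt e H ∉ H ∧ Nat.Prime (H.relIndex (H ⊔ Subgroup.zpowers (nxt e H))) := by
  set x : G := e (Nat.find hex) with hxdef
  have hx : x ∉ H := Nat.find_spec hex
  set m : ℕ := orderOf ((x : G) : G ⧸ H) with hmdef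
  set p : ℕ := m.minFac with hpdef
  have hm0 : m ≠ 0 := by
    intro h0
    have : m ∣ orderOf x := orderOf_map_dvd (QuotientGroup.mk' H) x
    rw [h0] at this
    exact hfin x (Nat.eq_zero_of_zero_dvd this)
  have hm1 : m ≠ 1 := by
    intro h1
    exact hx ((QuotientGroup.eq_one_iff x).mp (orderOf_eq_one_iff.mp h1))
  have hp : p.Prime := Nat.minFac_prime hm1
  have hpd : p ∣ m := Nat.minFac_dvd m
  have hdvd : m / p ∣ m := Nat.div_dvd_of_dvd hpd
  have hy : nxt e H = x ^ (m / p) := nxt_eq e H hex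
  have hmp0 : m / p ≠ 0 :=
    (Nat.div_pos (Nat.minFac_le (Nat.pos_of_ne_zero hm0)) hp.pos).ne'
  have hyorder : orderOf ((nxt e H : G) : G ⧸ H) = p := by
    rw [hy, QuotientGroup.mk_pow, orderOf_pow' _ hmp0, ← hmdef, Nat.gcd_eq_right hdvd,
      Nat.div_div_self hpd hm0]
  have hymem : nxt e H ∉ H := by
    intro hmem
    have : orderOf ((nxt e H : G) : G ⧸ H) = 1 :=
      orderOf_eq_one_iff.mpr ((QuotientGroup.eq_one_iff _).mpr hmem)
    rw [hyorder] at this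
    exact hp.one_lt.ne' this
  refine ⟨hymem, ?_⟩
  have key := Subgroup.relIndex_comap (H := (⊥ : Subgroup (G ⧸ H)))
    (QuotientGroup.mk' H) (H ⊔ Subgroup.zpowers (nxt e H))
  rw [MonoidHom.comap_bot, QuotientGroup.ker_mk'] at key
  rw [key, Subgroup.relIndex_bot_left, Subgroup.map_sup,
    MonoidHom.map_zpowers,
    (Subgroup.map_eq_bot_iff H).mpr (le_of_eq (QuotientGroup.ker_mk' H).symm),
    bot_sup_eq, Nat.card_zpowers]
  rw [show (QuotientGroup.mk' H) (nxt e H) = ((nxt e H : G) : G ⧸ H) from rfl, hyorder]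
  exact hp

end aux

/-- Every countably infinite locally finite abelian group admits a one-step ascending chain
with prime indexes. -/
theorem stmt3 {G : Type*} [CommGroup G] [Countable G] [Infinite G]
    (hlf : ∀ S : Finset G, ((Subgroup.closure (S : Set G)) : Set G).Finite) :
    ∃ (c : ℕ → Subgroup G) (g : ℕ → G),
      c 0 = ⊥ ∧
      (∀ i, c (i + 1) = Subgroup.closure (g '' {j | j < i + 1})) ∧
      (∀ i, g i ∉ c i) ∧
      (⨆ i, c i) = ⊤ ∧
      ∀ i, Nat.Prime ((c i).relIndex (c (i + 1))) := by
  -- every element has finite order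
  have hfin : ∀ x : G, orderOf x ≠ 0 := by
    intro x
    have h1 : ((Subgroup.closure ({x} : Set G)) : Set G).Finite := by
      simpa using hlf {x}
    rw [← Subgroup.zpowers_eq_closure] at h1
    haveI : Finite (Subgroup.zpowers x) := h1.to_subtype
    have h2 := orderOf_injective (Subgroup.zpowers x).subtype
      (Subgroup.subtype_injective _) ⟨x, Subgroup.mem_zpowers x⟩
    intro h0
    exact (orderOf_pos (⟨x, Subgroup.mem_zpowers x⟩ : Subgroup.zpowers x)).ne'
      (h2.symm.trans h0)
  obtain ⟨e, he⟩ := exists_surjective_nat G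
  set c : ℕ → Subgroup G := fun i => (chn e i).1 with hc
  set g : ℕ → G := fun i => (chn e i).2 with hg
  have hc0 : c 0 = ⊥ := rfl
  have hcsucc : ∀ i, c (i + 1) = c i ⊔ Subgroup.zpowers (g i) := fun i => rfl
  have hgnxt : ∀ i, g i = nxt e (c i) := by
    intro i; cases i <;> rfl
  -- closure formula
  have hform : ∀ i, c i = Subgroup.closure (g '' {j | j < i}) := by
    intro i
    induction i with
    | zero =>
        have : {j : ℕ | j < 0} = (∅ : Set ℕ) := by ext j; simp
        rw [this, Set.image_empty, Subgroup.closure_empty, hc0]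
    | succ i ih =>
        have hset : {j : ℕ | j < i + 1} = {j : ℕ | j < i} ∪ {i} := by
          ext j
          simp only [Set.mem_union, Set.mem_setOf_eq, Set.mem_singleton_iff]
          omega
        rw [hcsucc i, ih, hset, Set.image_union, Set.image_singleton,
          Subgroup.closure_union, ← Subgroup.zpowers_eq_closure]
  -- finiteness of each stage
  have hcfin : ∀ i, ((c i : Set G)).Finite := by
    intro i
    rw [hform i]
    have hs : (g '' {j | j < i}).Finite := (Set.finite_Iio i).image g
    have := hlf hs.toFinset
    rwa [Set.Finite.coe_toFinset] at this
  -- existence of a missing enumerated element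
  have hex : ∀ i, ∃ j, e j ∉ c i := by
    intro i
    by_contra h
    push_neg at h
    have hall : ∀ x : G, x ∈ c i := by
      intro x
      obtain ⟨j, rfl⟩ := he x
      exact h j
    have huniv : (c i : Set G) = Set.univ := Set.eq_univ_of_forall hall
    have hfi := hcfin i
    rw [huniv] at hfi
    exact Set.infinite_univ hfi
  have hstep : ∀ i, g i ∉ c i ∧ Nat.Prime ((c i).relIndex (c (i + 1))) := by
    intro i
    have := step_lemma e (c i) hfin (hex i)
    rw [← hgnxt i] at this
    rw [hcsucc i]
    exact this
  -- monotonicity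
  have hmono : Monotone c := by
    apply monotone_nat_of_le_succ
    intro i
    rw [hcsucc i]
    exact le_sup_left
  -- the union is everything
  have hsup : (⨆ i, c i) = ⊤ := by
    rw [eq_top_iff]
    intro x _
    suffices h : ∀ k, ∃ i, e k ∈ c i by
      obtain ⟨k, rfl⟩ := he x
      obtain ⟨i, hi⟩ := h k
      exact Subgroup.mem_iSup_of_mem i hi
    have bound : ∀ k, (∀ j < k, ∃ i, e j ∈ c i) → ∃ i₀, ∀ j < k, e j ∈ c i₀ := by
      intro k
      induction k with
      | zero => exact fun _ => ⟨0, by omega⟩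
      | succ k ih =>
        intro hk
        obtain ⟨i₀, h₀⟩ := ih (fun j hj => hk j (by omega))
        obtain ⟨i₁, h₁⟩ := hk k (by omega)
        refine ⟨max i₀ i₁, fun j hj => ?_⟩
        rcases Nat.lt_succ_iff_lt_or_eq.mp hj with h | rfl
        · exact hmono (le_max_left _ _) (h₀ j h)
        · exact hmono (le_max_right _ _) h₁
    intro k
    induction k using Nat.strong_induction_on with
    | _ k ihk =>
      obtain ⟨i₀, hi₀⟩ := bound k ihk
      -- induction on the order of e k in the quotient
      have key : ∀ n, ∀ i, i₀ ≤ i → orderOf ((e k : G) : G ⧸ c i) ≤ n →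
          ∃ i', e k ∈ c i' := by
        intro n
        induction n using Nat.strong_induction_on with
        | _ n ihn =>
          intro i hi hle
          by_cases hck : e k ∈ c i
          · exact ⟨i, hck⟩
          · set m : ℕ := orderOf ((e k : G) : G ⧸ c i) with hmdef
            have hexi : ∃ j, e j ∉ c i := ⟨k, hck⟩
            have hfind : Nat.find hexi = k := by
              apply le_antisymm (Nat.find_min' hexi hck)
              by_contra hlt
              push_neg at hlt
              exact Nat.find_spec hexi (hmono hi (hi₀ _ hlt))
            have hm0 : m ≠ 0 := by
              intro h0
              have : m ∣ orderOf (e k) := orderOf_map_dvd (QuotientGroup.mk' (c i)) (e k)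
              rw [h0] at this
              exact hfin (e k) (Nat.eq_zero_of_zero_dvd this)
            have hm1 : m ≠ 1 := fun h1 =>
              hck ((QuotientGroup.eq_one_iff _).mp (orderOf_eq_one_iff.mp h1))
            set p : ℕ := m.minFac with hpdef
            have hp : p.Prime := Nat.minFac_prime hm1
            have hgi : g i = (e k) ^ (m / p) := by
              rw [hgnxt i, nxt_eq e (c i) hexi, hfind]
            have hmem : (e k) ^ (m / p) ∈ c (i + 1) := by
              rw [← hgi, hcsucc i]
              exact Subgroup.mem_sup_right (Subgroup.mem_zpowers _)
            have hdvd : orderOf ((e k : G) : G ⧸ c (i + 1)) ∣ m / p := by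
              apply orderOf_dvd_of_pow_eq_one
              rw [← QuotientGroup.mk_pow]
              exact (QuotientGroup.eq_one_iff _).mpr hmem
            have hmp0 : 0 < m / p :=
              Nat.div_pos (Nat.minFac_le (Nat.pos_of_ne_zero hm0)) hp.pos
            have hlt : orderOf ((e k : G) : G ⧸ c (i + 1)) < n := by
              calc orderOf ((e k : G) : G ⧸ c (i + 1)) ≤ m / p := Nat.le_of_dvd hmp0 hdvd
                _ < m := Nat.div_lt_self (Nat.pos_of_ne_zero hm0) hp.one_lt
                _ ≤ n := hle
            exact ihn _ hlt (i + 1) (le_trans hi (Nat.le_succ i)) le_rfl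
      exact key _ i₀ le_rfl le_rfl
  exact ⟨c, g, hc0, fun i => hform (i + 1), fun i => (hstep i).1, hsup,
    fun i => (hstep i).2⟩
end

section
/- Let G be a countable abelian group, H ≤ G a subgroup such that every element of G/H has odd order, and let H = G₀ < G₁ < ... be a one-step ascending chain associated to H with generators (gᵢ) and odd indexes mᵢ = 2kᵢ + 1. Then every element g ∈ G can be written uniquely as g = h + Σᵢ rᵢ·gᵢ where h ∈ H, each rᵢ is an integer with |rᵢ| ≤ kᵢ, and rᵢ = 0 for all but finitely many i. -/
open AddSubgroup


/-- The order of `a` in `G ⧸ N` equals the relative index of `N` in `N ⊔ closure {a}`. -/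
private lemma key_order {G : Type*} [AddCommGroup G] (N : AddSubgroup G) (a : G) :
    addOrderOf ((a : G) : G ⧸ N) = N.relIndex (N ⊔ closure {a}) := by
  set K := N ⊔ closure {a}
  set φ := (QuotientAddGroup.mk' N).comp K.subtype with hφ
  have hker : φ.ker = N.addSubgroupOf K := by
    ext x
    simp [φ, AddSubgroup.mem_addSubgroupOf, QuotientAddGroup.eq_zero_iff]
  have hrange : φ.range = zmultiples ((a : G) : G ⧸ N) := by
    have : φ.range = K.map (QuotientAddGroup.mk' N) := by
      ext x
      simp [φ, AddSubgroup.mem_map]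
    rw [this]
    have : K.map (QuotientAddGroup.mk' N)
        = N.map (QuotientAddGroup.mk' N) ⊔ (closure {a}).map (QuotientAddGroup.mk' N) := by
      simp [K, AddSubgroup.map_sup]
    rw [this]
    have h1 : N.map (QuotientAddGroup.mk' N) = ⊥ := by
      rw [eq_bot_iff]
      rintro x ⟨y, hy, rfl⟩
      simpa [QuotientAddGroup.eq_zero_iff] using hy
    have h2 : (closure {a}).map (QuotientAddGroup.mk' N)
        = closure {((a : G) : G ⧸ N)} := by
      rw [AddMonoidHom.map_closure]; simp
    rw [h1, h2, bot_sup_eq, AddSubgroup.zmultiples_eq_closure]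
  have e1 : (K ⧸ N.addSubgroupOf K) ≃ zmultiples ((a : G) : G ⧸ N) := by
    rw [← hker, ← hrange]
    exact (QuotientAddGroup.quotientKerEquivRange φ).toEquiv
  calc addOrderOf ((a : G) : G ⧸ N)
      = Nat.card (zmultiples ((a : G) : G ⧸ N)) := (Nat.card_zmultiples _).symm
    _ = Nat.card (K ⧸ N.addSubgroupOf K) := (Nat.card_congr e1).symm
    _ = N.relIndex K := ((N.addSubgroupOf K).index_eq_card).symm



section aux
variable {G : Type*} [AddCommGroup G]

private lemma zsmul_mem_iff {N : AddSubgroup G} {a : G} {m : ℕ}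
    (hord : addOrderOf ((a : G) : G ⧸ N) = m) (t : ℤ) :
    t • a ∈ N ↔ (m : ℤ) ∣ t := by
  rw [← hord, addOrderOf_dvd_iff_zsmul_eq_zero]
  rw [← QuotientAddGroup.mk_zsmul, QuotientAddGroup.eq_zero_iff]

private lemma main_aux
    (H : AddSubgroup G)
    (c : ℕ → AddSubgroup G) (g : ℕ → G) (k : ℕ → ℕ)
    (hc0 : c 0 = H)
    (hstep : ∀ i, c (i + 1) = c i ⊔ AddSubgroup.closure {g i})
    (hord : ∀ i, addOrderOf ((g i : G) : G ⧸ c i) = 2 * k i + 1)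
    (hmono : Monotone c)
    (hunion : (⨆ i, c i) = ⊤) :
    ∀ x : G, ∃! p : G × (ℕ →₀ ℤ),
      p.1 ∈ H ∧ (∀ i, |p.2 i| ≤ (k i : ℤ)) ∧
        x = p.1 + p.2.sum fun i r => r • g i := by
  have hgmem : ∀ i, g i ∈ c (i + 1) := fun i => by
    rw [hstep i]
    exact AddSubgroup.mem_sup_right (AddSubgroup.mem_closure_singleton.mpr ⟨1, one_zsmul _⟩)
  have hsmul0 : ∀ i : ℕ, (0 : ℤ) • g i = 0 := fun i => zero_smul _ _
  have hsmuladd : ∀ (i : ℕ) (b₁ b₂ : ℤ), (b₁ + b₂) • g i = b₁ • g i + b₂ • g i :=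
    fun i b₁ b₂ => add_smul b₁ b₂ (g i)
  -- existence within each c n
  have hex : ∀ n, ∀ x ∈ c n, ∃ p : G × (ℕ →₀ ℤ),
      (p.1 ∈ H ∧ (∀ i, |p.2 i| ≤ (k i : ℤ)) ∧ x = p.1 + p.2.sum fun i r => r • g i)
        ∧ ∀ j, n ≤ j → p.2 j = 0 := by
    intro n
    induction n with
    | zero =>
      intro x hx
      exact ⟨⟨x, 0⟩, ⟨hc0 ▸ hx, fun i => by simp, by simp⟩, fun j _ => rfl⟩
    | succ n ih =>
      intro x hx
      rw [hstep n, AddSubgroup.mem_sup] at hx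
      obtain ⟨y, hy, z, hz, rfl⟩ := hx
      obtain ⟨t, rfl⟩ := AddSubgroup.mem_closure_singleton.mp hz
      set m : ℕ := 2 * k n + 1 with hm
      set r : ℤ := t.bmod m with hr
      have hmpos : 0 < m := Nat.succ_pos _
      have hrle : |r| ≤ (k n : ℤ) := by
        rw [abs_le]
        constructor
        · have := Int.le_bmod (x := t) hmpos
          have h2 : ((m : ℤ) / 2) = (k n : ℤ) := by
            rw [hm]; push_cast; omega
          omega
        · have := Int.bmod_lt (x := t) hmpos
          have h2 : (((m : ℤ) + 1) / 2) = (k n : ℤ) + 1 := by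
            rw [hm]; push_cast; omega
          omega
      have hdvd : (m : ℤ) ∣ t - r := by
        have hmod : r % (m : ℤ) = t % (m : ℤ) := Int.bmod_emod
        exact Int.ModEq.dvd hmod
      have hmem : y + (t - r) • g n ∈ c n :=
        (c n).add_mem hy ((zsmul_mem_iff (hord n) (t - r)).mpr hdvd)
      obtain ⟨⟨h, q⟩, ⟨hH, hqle, hqsum⟩, hqzero⟩ := ih _ hmem
      simp only at hH hqle hqsum hqzero
      refine ⟨⟨h, q + Finsupp.single n r⟩, ⟨hH, ?_, ?_⟩, ?_⟩
      · intro i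
        rcases eq_or_ne i n with rfl | hne
        · rw [Finsupp.add_apply, hqzero i le_rfl, zero_add, Finsupp.single_eq_same]
          exact hrle
        · rw [Finsupp.add_apply, Finsupp.single_eq_of_ne' (Ne.symm hne), add_zero]
          exact hqle i
      · simp only
        rw [Finsupp.sum_add_index' hsmul0 hsmuladd,
          Finsupp.sum_single_index (hsmul0 n)]
        have hsplit : (y + t • g n) = (y + (t - r) • g n) + r • g n := by
          rw [sub_smul]; abel
        rw [hsplit, hqsum, add_assoc]
      · intro j hj
        simp only at hj ⊢
        rw [Finsupp.add_apply, hqzero j (le_trans (Nat.le_succ n) hj), zero_add,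
          Finsupp.single_eq_of_ne' (by omega : n ≠ j)]
  -- main proof
  intro x
  have hx : x ∈ ⨆ i, c i := hunion ▸ AddSubgroup.mem_top x
  rw [AddSubgroup.mem_iSup_of_directed hmono.directed_le] at hx
  obtain ⟨n₀, hxn⟩ := hx
  obtain ⟨p, hp, -⟩ := hex n₀ x hxn
  refine ⟨p, hp, ?_⟩
  -- uniqueness
  rintro ⟨h', q'⟩ ⟨hH', hle', hsum'⟩
  obtain ⟨hH, hle, hsum⟩ := hp
  obtain ⟨h, q⟩ := p
  simp only at hH hle hsum hH' hle' hsum' ⊢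
  have key : h + q.sum (fun i r => r • g i) = h' + q'.sum (fun i r => r • g i) := by
    rw [← hsum, ← hsum']
  have hq : q' = q := by
    by_contra hne
    set d : ℕ →₀ ℤ := q' - q with hd
    have hdne : d ≠ 0 := fun h0 => hne (sub_eq_zero.mp (hd ▸ h0))
    have hsupp : d.support.Nonempty := Finsupp.support_nonempty_iff.mpr hdne
    set n := d.support.max' hsupp with hn
    have hnmem : n ∈ d.support := d.support.max'_mem hsupp
    have hdsum : d.sum (fun i r => r • g i) = h - h' := by
      rw [hd, Finsupp.sum_sub_index (fun a b₁ b₂ => sub_smul b₁ b₂ (g a))]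
      refine sub_eq_sub_iff_add_eq_add.mpr ?_
      rw [add_comm (q'.sum _) h']
      exact key.symm
    have hHle : H ≤ c n := hc0 ▸ hmono (Nat.zero_le n)
    have hrest : ∑ i ∈ d.support.erase n, d i • g i ∈ c n := by
      refine AddSubgroup.sum_mem _ fun i hi => ?_
      have hin : i < n := by
        have h1 := Finset.ne_of_mem_erase hi
        have h2 := d.support.le_max' i (Finset.mem_of_mem_erase hi)
        omega
      exact zsmul_mem (hmono hin (hgmem i)) _
    have hsum_split : d n • g n + ∑ i ∈ d.support.erase n, d i • g i
        = ∑ i ∈ d.support, d i • g i :=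
      Finset.add_sum_erase d.support (fun i => d i • g i) hnmem
    have hmem : d n • g n ∈ c n := by
      have h1 : ∑ i ∈ d.support, d i • g i ∈ c n := by
        have h2 : ∑ i ∈ d.support, d i • g i = h - h' := hdsum
        rw [h2]; exact sub_mem (hHle hH) (hHle hH')
      have : d n • g n = (∑ i ∈ d.support, d i • g i)
          - ∑ i ∈ d.support.erase n, d i • g i := by
        rw [← hsum_split]; abel
      rw [this]; exact sub_mem h1 hrest
    have hdvd : ((2 * k n + 1 : ℕ) : ℤ) ∣ d n := (zsmul_mem_iff (hord n) _).mp hmem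
    have hdn0 : d n ≠ 0 := Finsupp.mem_support_iff.mp hnmem
    have hdabs : |d n| ≤ 2 * (k n : ℤ) := by
      have h1 := hle' n
      have h2 := hle n
      have : d n = q' n - q n := by rw [hd]; simp
      rw [this]
      calc |q' n - q n| ≤ |q' n| + |q n| := abs_sub _ _
        _ ≤ 2 * (k n : ℤ) := by omega
    have hge := Int.le_of_dvd (abs_pos.mpr hdn0) ((dvd_abs _ _).mpr hdvd)
    push_cast at hge
    omega
  subst hq
  have : h = h' := add_right_cancel key
  simp [this]
end aux


/-- Unique representation of elements of an odd pair `(G, H)` with respect to a one-step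
ascending chain associated to `H`: every `x ∈ G` is uniquely `h + Σᵢ rᵢ • gᵢ` with
`h ∈ H`, `|rᵢ| ≤ kᵢ`, and finitely many `rᵢ` nonzero. -/
theorem stmt4 {G : Type*} [AddCommGroup G] [Countable G]
    (H : AddSubgroup G) (hodd : ∀ x : G ⧸ H, Odd (addOrderOf x))
    (c : ℕ → AddSubgroup G) (g : ℕ → G) (k : ℕ → ℕ)
    (hc0 : c 0 = H)
    (hstep : ∀ i, c (i + 1) = c i ⊔ AddSubgroup.closure {g i})
    (hnot : ∀ i, g i ∉ c i)
    (hunion : (⨆ i, c i) = ⊤)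
    (hindex : ∀ i, (c i).relIndex (c (i + 1)) = 2 * k i + 1) :
    ∀ x : G, ∃! p : G × (ℕ →₀ ℤ),
      p.1 ∈ H ∧ (∀ i, |p.2 i| ≤ (k i : ℤ)) ∧
        x = p.1 + p.2.sum fun i r => r • g i := by
  have hmono : Monotone c := monotone_nat_of_le_succ fun i => by
    rw [hstep i]; exact le_sup_left
  have hord : ∀ i, addOrderOf ((g i : G) : G ⧸ c i) = 2 * k i + 1 := fun i => by
    rw [key_order (c i) (g i), ← hstep i, hindex i]
  exact main_aux H c g k hc0 hstep hord hmono hunion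
end

section
/- The short exact sequence 0 → ℤ → ℤ[1/2] → ℤ(2^∞) → 0 coarsely splits: there exist proper left invariant metrics on ℤ[1/2] and on the Prüfer 2-group ℤ(2^∞), with ℤ carrying its standard word metric, and a coarse equivalence f : ℤ[1/2] → ℤ ⊕ ℤ(2^∞) (with the ℓ¹-sum metric) such that f restricted to ℤ is the identity inclusion onto the first factor and the composition of f with projection to ℤ(2^∞) equals the quotient map ℤ[1/2] → ℤ[1/2]/ℤ ≅ ℤ(2^∞). -/
/-- `d` is a proper (left) invariant metric on the additive group `G`. -/
def IsProperInvAddMetric {G : Type*} [AddGroup G] (d : G → G → ℝ) : Prop :=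
  (∀ x y, 0 ≤ d x y) ∧ (∀ x y, d x y = 0 ↔ x = y) ∧ (∀ x y, d x y = d y x) ∧
  (∀ x y z, d x z ≤ d x y + d y z) ∧ (∀ g h₁ h₂, d (g + h₁) (g + h₂) = d h₁ h₂) ∧
  (∀ (x : G) (K : ℝ), {y : G | d x y ≤ K}.Finite)

/-- `f` is a coarse map between the metric spaces `(X, dX)` and `(Y, dY)`. -/
def IsCoarseMap {X Y : Type*} (dX : X → X → ℝ) (dY : Y → Y → ℝ) (f : X → Y) : Prop :=
  ∀ δ : ℝ, 0 < δ → ∃ ε : ℝ, ∀ x y, dX x y ≤ δ → dY (f x) (f y) ≤ ε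

/-- `f` is a coarse equivalence between `(X, dX)` and `(Y, dY)`: it is a coarse map
with a coarse inverse, the two compositions being at bounded distance from identities. -/
def IsCoarseEquiv {X Y : Type*} (dX : X → X → ℝ) (dY : Y → Y → ℝ) (f : X → Y) : Prop :=
  IsCoarseMap dX dY f ∧ ∃ g : Y → X, IsCoarseMap dY dX g ∧
    (∃ K₁ : ℝ, ∀ x, dX (g (f x)) x ≤ K₁) ∧ (∃ K₂ : ℝ, ∀ y, dY (f (g y)) y ≤ K₂)

/-- The additive group `ℤ[1/2]` of dyadic rationals, as an additive subgroup of `ℚ`. -/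
def DyadicSubgroup : AddSubgroup ℚ where
  carrier := {q : ℚ | ∃ (m : ℤ) (k : ℕ), q = (m : ℚ) / 2 ^ k}
  zero_mem' := ⟨0, 0, by norm_num⟩
  add_mem' := by
    rintro a b ⟨m, k, rfl⟩ ⟨m', k', rfl⟩
    refine ⟨m * 2 ^ k' + m' * 2 ^ k, k + k', ?_⟩
    push_cast
    rw [div_add_div _ _ (by positivity) (by positivity), pow_add]
    ring_nf
  neg_mem' := by
    rintro a ⟨m, k, rfl⟩
    exact ⟨-m, k, by push_cast; ring⟩

/-- The subgroup of integers inside `ℤ[1/2]`. -/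
def IntSub : AddSubgroup DyadicSubgroup where
  carrier := {x | ∃ m : ℤ, (x : ℚ) = (m : ℚ)}
  zero_mem' := ⟨0, by norm_num⟩
  add_mem' := by
    rintro a b ⟨m, hm⟩ ⟨m', hm'⟩
    exact ⟨m + m', by push_cast [hm, hm']; ring⟩
  neg_mem' := by
    rintro a ⟨m, hm⟩
    exact ⟨-m, by push_cast [hm]; ring⟩

/-- The Prüfer 2-group `ℤ(2^∞) = ℤ[1/2]/ℤ`. -/
abbrev Prufer2 := DyadicSubgroup ⧸ IntSub

/-- The inclusion `ℤ → ℤ[1/2]`. -/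
def intToDyadic (m : ℤ) : DyadicSubgroup := ⟨(m : ℚ), m, 0, by norm_num⟩

/-- The quotient map `ℤ[1/2] → ℤ(2^∞)`. -/
def toPrufer2 : DyadicSubgroup → Prufer2 := QuotientAddGroup.mk

namespace Stmt6Aux

/-- dyadic with numerator m, denominator 2^k -/
def dmk (m : ℤ) (k : ℕ) : DyadicSubgroup := ⟨(m:ℚ)/2^k, m, k, rfl⟩

/-- `x * 2^k` is an integer. -/
def IsIntAt (x : DyadicSubgroup) (k : ℕ) : Prop := ∃ m : ℤ, (x:ℚ) * 2^k = (m:ℚ)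

lemma isIntAt_iff_den (x : DyadicSubgroup) (k : ℕ) : IsIntAt x k ↔ ((x:ℚ) * 2^k).den = 1 := by
  constructor
  · rintro ⟨m, hm⟩; rw [hm]; exact Rat.den_intCast m
  · intro h
    exact ⟨((x:ℚ) * 2^k).num, ((Rat.den_eq_one_iff _).mp h).symm⟩

instance (x : DyadicSubgroup) : DecidablePred (IsIntAt x) := fun k =>
  decidable_of_iff _ (isIntAt_iff_den x k).symm

lemma exists_isIntAt (x : DyadicSubgroup) : ∃ k, IsIntAt x k := by
  obtain ⟨m, k, hm⟩ := x.2
  exact ⟨k, m, by rw [hm]; field_simp⟩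

lemma isIntAt_intCast (m : ℤ) (k : ℕ) (x : DyadicSubgroup) (hx : (x:ℚ) = (m:ℚ)) : IsIntAt x k :=
  ⟨m * 2^k, by rw [hx]; push_cast; ring⟩

lemma IsIntAt.mono {x : DyadicSubgroup} {k k' : ℕ} (h : IsIntAt x k) (hk : k ≤ k') : IsIntAt x k' := by
  obtain ⟨m, hm⟩ := h
  refine ⟨m * 2^(k' - k), ?_⟩
  have : (x:ℚ) * 2^k' = ((x:ℚ) * 2^k) * 2^(k' - k) := by
    rw [mul_assoc, ← pow_add, Nat.add_sub_cancel' hk]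
  rw [this, hm]; push_cast; ring

lemma IsIntAt.add {x y : DyadicSubgroup} {k : ℕ} (hx : IsIntAt x k) (hy : IsIntAt y k) :
    IsIntAt (x + y) k := by
  obtain ⟨m, hm⟩ := hx; obtain ⟨n, hn⟩ := hy
  exact ⟨m + n, by rw [AddSubgroup.coe_add, add_mul, hm, hn]; push_cast; ring⟩


lemma IsIntAt.neg {x : DyadicSubgroup} {k : ℕ} (hx : IsIntAt x k) : IsIntAt (-x) k := by
  obtain ⟨m, hm⟩ := hx
  exact ⟨-m, by rw [AddSubgroup.coe_neg, neg_mul, hm]; push_cast; ring⟩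

/-- The 2-adic "level" of a dyadic rational. -/
def qval (x : DyadicSubgroup) : ℕ := Nat.find (exists_isIntAt x)

lemma qval_spec (x : DyadicSubgroup) : IsIntAt x (qval x) := Nat.find_spec (exists_isIntAt x)

lemma qval_le {x : DyadicSubgroup} {k : ℕ} (h : IsIntAt x k) : qval x ≤ k := Nat.find_le h

lemma isIntAt_qval_le {x : DyadicSubgroup} {k : ℕ} (h : qval x ≤ k) : IsIntAt x k :=
  (qval_spec x).mono h

lemma qval_zero : qval 0 = 0 :=
  Nat.le_zero.mp (qval_le ⟨0, by norm_num⟩)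

lemma qval_eq_zero_iff {x : DyadicSubgroup} : qval x = 0 ↔ x ∈ IntSub := by
  constructor
  · intro h
    obtain ⟨m, hm⟩ := isIntAt_qval_le h.le
    exact ⟨m, by simpa using hm⟩
  · rintro ⟨m, hm⟩
    exact Nat.le_zero.mp (qval_le ⟨m, by simpa using hm⟩)

lemma qval_neg (x : DyadicSubgroup) : qval (-x) = qval x := by
  apply le_antisymm
  · exact qval_le (qval_spec x).neg
  · have := qval_le (qval_spec (-x)).neg
    simpa using this

lemma qval_add_le (x y : DyadicSubgroup) : qval (x + y) ≤ qval x + qval y := by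
  apply qval_le
  exact ((isIntAt_qval_le (Nat.le_add_right _ _)).add
    (isIntAt_qval_le (Nat.le_add_left _ _)))

lemma qval_add_int (x : DyadicSubgroup) {n : DyadicSubgroup} (hn : n ∈ IntSub) : qval (x + n) = qval x := by
  obtain ⟨m, hm⟩ := hn
  apply le_antisymm
  · exact qval_le ((qval_spec x).add (isIntAt_intCast m _ _ hm))
  · have h2 : IsIntAt (x + n + -n) (qval (x + n)) :=
      (qval_spec (x + n)).add ((isIntAt_intCast m _ _ hm).neg)
    rw [add_neg_cancel_right] at h2
    exact qval_le h2

/-- length function on the Prüfer group -/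
def lP (p : Prufer2) : ℕ :=
  Quotient.liftOn' p qval (by
    intro a b hab
    have h : -a + b ∈ IntSub := QuotientAddGroup.leftRel_apply.mp hab
    have hb : b = a + (-a + b) := (add_neg_cancel_left a b).symm
    rw [hb, qval_add_int a h])

lemma lP_mk (x : DyadicSubgroup) : lP (x : Prufer2) = qval x := rfl

lemma lP_zero : lP 0 = 0 := by
  rw [← QuotientAddGroup.mk_zero, lP_mk, qval_zero]

lemma lP_neg (p : Prufer2) : lP (-p) = lP p := by
  induction p using QuotientAddGroup.induction_on with
  | H z => rw [← QuotientAddGroup.mk_neg, lP_mk, lP_mk, qval_neg]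

lemma lP_add_le (p q : Prufer2) : lP (p + q) ≤ lP p + lP q := by
  induction p using QuotientAddGroup.induction_on with
  | H z =>
    induction q using QuotientAddGroup.induction_on with
    | H w => rw [← QuotientAddGroup.mk_add, lP_mk, lP_mk, lP_mk]; exact qval_add_le z w

lemma lP_eq_zero_iff {p : Prufer2} : lP p = 0 ↔ p = 0 := by
  induction p using QuotientAddGroup.induction_on with
  | H z =>
    rw [lP_mk, qval_eq_zero_iff]
    exact (QuotientAddGroup.eq_zero_iff z).symm

/-- canonical section: representative in [0,1) -/
noncomputable def sct (p : Prufer2) : DyadicSubgroup := p.out - intToDyadic ⌊((p.out : DyadicSubgroup) : ℚ)⌋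

lemma sct_coe (p : Prufer2) : ((sct p : DyadicSubgroup) : ℚ) = Int.fract ((p.out : DyadicSubgroup) : ℚ) := by
  rw [sct, AddSubgroup.coe_sub, Int.fract]
  rfl

lemma sct_nonneg (p : Prufer2) : 0 ≤ ((sct p : DyadicSubgroup) : ℚ) := by
  rw [sct_coe]; exact Int.fract_nonneg _

lemma sct_lt_one (p : Prufer2) : ((sct p : DyadicSubgroup) : ℚ) < 1 := by
  rw [sct_coe]; exact Int.fract_lt_one _

lemma intToDyadic_mem (m : ℤ) : intToDyadic m ∈ IntSub := ⟨m, rfl⟩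

lemma mk_intToDyadic (m : ℤ) : ((intToDyadic m : DyadicSubgroup) : Prufer2) = 0 :=
  (QuotientAddGroup.eq_zero_iff _).mpr (intToDyadic_mem m)

lemma mk_sct (p : Prufer2) : ((sct p : DyadicSubgroup) : Prufer2) = p := by
  rw [sct, QuotientAddGroup.mk_sub, mk_intToDyadic, sub_zero]
  exact QuotientAddGroup.out_eq' p

lemma lP_eq_qval_sct (p : Prufer2) : lP p = qval (sct p) := by
  conv_lhs => rw [← mk_sct p]
  rfl

lemma dmk_coe (m : ℤ) (k : ℕ) : ((dmk m k : DyadicSubgroup) : ℚ) = (m:ℚ)/2^k := rfl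

lemma finite_ball (N : ℕ) (M : ℤ) :
    {z : DyadicSubgroup | IsIntAt z N ∧ |(z:ℚ)| ≤ (M:ℚ)}.Finite := by
  apply Set.Finite.subset ((Set.finite_Icc (-(M*2^N)) (M*2^N)).image (fun m => dmk m N))
  rintro z ⟨⟨m, hm⟩, hz⟩
  refine ⟨m, ?_, ?_⟩
  · simp only [Set.mem_Icc, ← abs_le]
    have h2 : |(m:ℚ)| ≤ (M:ℚ) * 2^N := by
      rw [← hm, abs_mul, abs_pow, show |(2:ℚ)| = 2 by norm_num]
      exact mul_le_mul_of_nonneg_right hz (by positivity)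
    exact_mod_cast h2
  · apply Subtype.ext
    rw [dmk_coe]
    exact (div_eq_iff (by positivity)).mpr hm.symm

/-- metric on the dyadics -/
noncomputable def dD (x y : DyadicSubgroup) : ℝ :=
  |((y:ℚ):ℝ) - ((x:ℚ):ℝ)| + (qval (y - x) : ℝ)

/-- metric on the Prüfer group -/
noncomputable def dP (p q : Prufer2) : ℝ := (lP (q - p) : ℝ)

lemma qval_sub_comm (x y : DyadicSubgroup) : qval (y - x) = qval (x - y) := by
  rw [← qval_neg (x - y), neg_sub]

lemma dD_proper : IsProperInvAddMetric dD := by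
  refine ⟨fun x y => add_nonneg (abs_nonneg _) (Nat.cast_nonneg _), ?_, ?_, ?_, ?_, ?_⟩
  · intro x y
    constructor
    · intro h
      have h1 : |((y:ℚ):ℝ) - ((x:ℚ):ℝ)| = 0 := by
        have := abs_nonneg (((y:ℚ):ℝ) - ((x:ℚ):ℝ))
        have := Nat.cast_nonneg (α := ℝ) (qval (y - x))
        unfold dD at h; linarith
      have : ((y:ℚ):ℝ) = ((x:ℚ):ℝ) := by
        have := abs_eq_zero.mp h1; linarith
      exact (Subtype.ext (by exact_mod_cast this.symm : (x:ℚ) = (y:ℚ)))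
    · rintro rfl
      simp [dD, qval_zero]
  · intro x y
    unfold dD
    rw [abs_sub_comm, qval_sub_comm]
  · intro x y z
    unfold dD
    have h1 : |((z:ℚ):ℝ) - ((x:ℚ):ℝ)| ≤ |((y:ℚ):ℝ) - ((x:ℚ):ℝ)| + |((z:ℚ):ℝ) - ((y:ℚ):ℝ)| := by
      have := abs_add_le (((y:ℚ):ℝ) - ((x:ℚ):ℝ)) (((z:ℚ):ℝ) - ((y:ℚ):ℝ))
      rw [show ((y:ℚ):ℝ) - ((x:ℚ):ℝ) + (((z:ℚ):ℝ) - ((y:ℚ):ℝ)) = ((z:ℚ):ℝ) - ((x:ℚ):ℝ) by ring] at this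
      exact this
    have h2 : qval (z - x) ≤ qval (y - x) + qval (z - y) := by
      have := qval_add_le (y - x) (z - y)
      rw [show y - x + (z - y) = z - x by abel] at this
      exact this
    have h2' : (qval (z - x) : ℝ) ≤ (qval (y - x) : ℝ) + (qval (z - y) : ℝ) := by
      exact_mod_cast h2
    linarith
  · intro g h₁ h₂
    unfold dD
    have e1 : g + h₂ - (g + h₁) = h₂ - h₁ := by abel
    rw [e1]
    congr 1
    have : ((g + h₂ : DyadicSubgroup) : ℚ) - ((g + h₁ : DyadicSubgroup) : ℚ) = ((h₂:ℚ)) - ((h₁:ℚ)) := by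
      push_cast; ring
    rw [show (((g + h₂ : DyadicSubgroup):ℚ):ℝ) - (((g + h₁ : DyadicSubgroup):ℚ):ℝ) = (((h₂:ℚ)):ℝ) - (((h₁:ℚ)):ℝ) by
      exact_mod_cast congrArg (fun q : ℚ => (q:ℝ)) this]
  · intro x K
    set N : ℕ := ⌈K⌉₊ with hN
    apply Set.Finite.subset (((finite_ball N (N:ℤ)).image (fun z => x + z)))
    intro y hy
    have hy' : dD x y ≤ K := hy
    have hnn1 := abs_nonneg (((y:ℚ):ℝ) - ((x:ℚ):ℝ))
    have hnn2 := Nat.cast_nonneg (α := ℝ) (qval (y - x))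
    have hq : (qval (y - x) : ℝ) ≤ K := by unfold dD at hy'; linarith
    have habs : |((y:ℚ):ℝ) - ((x:ℚ):ℝ)| ≤ K := by unfold dD at hy'; linarith
    have hKN : K ≤ (N:ℝ) := Nat.le_ceil K
    refine ⟨y - x, ⟨?_, ?_⟩, by show x + (y - x) = y; rw [add_comm]; exact sub_add_cancel y x⟩
    · apply isIntAt_qval_le
      have : (qval (y - x) : ℝ) ≤ (N:ℝ) := le_trans hq hKN
      exact_mod_cast this
    · have : |((y:ℚ):ℝ) - ((x:ℚ):ℝ)| ≤ (N:ℝ) := le_trans habs hKN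
      have h2 : |((y - x : DyadicSubgroup):ℚ)| ≤ ((N:ℤ):ℚ) := by
        have e : (((y - x : DyadicSubgroup):ℚ):ℝ) = ((y:ℚ):ℝ) - ((x:ℚ):ℝ) := by push_cast; ring
        have : |(((y - x : DyadicSubgroup):ℚ):ℝ)| ≤ (N:ℝ) := by rw [e]; exact this
        exact_mod_cast this
      exact h2

lemma dP_mk (x y : DyadicSubgroup) : dP (toPrufer2 x) (toPrufer2 y) = (qval (y - x) : ℝ) := by
  show dP (x : Prufer2) (y : Prufer2) = _
  unfold dP
  rw [← QuotientAddGroup.mk_sub, lP_mk]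

lemma dP_proper : IsProperInvAddMetric dP := by
  refine ⟨fun p q => Nat.cast_nonneg _, ?_, ?_, ?_, ?_, ?_⟩
  · intro p q
    unfold dP
    rw [Nat.cast_eq_zero, lP_eq_zero_iff, sub_eq_zero]
    exact eq_comm
  · intro p q; unfold dP; rw [← lP_neg (q - p), neg_sub]
  · intro p q r
    unfold dP
    have h := lP_add_le (q - p) (r - q)
    rw [show q - p + (r - q) = r - p by abel] at h
    exact_mod_cast h
  · intro g p q
    unfold dP
    rw [show g + q - (g + p) = q - p by abel]
  · intro p K
    set N : ℕ := ⌈K⌉₊ with hN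
    apply Set.Finite.subset (((finite_ball N 1).image (fun z : DyadicSubgroup => p + (z : Prufer2))))
    intro q hq
    have hq' : (lP (q - p) : ℝ) ≤ K := hq
    have hle : lP (q - p) ≤ N := by exact_mod_cast le_trans hq' (Nat.le_ceil K)
    refine ⟨sct (q - p), ⟨?_, ?_⟩, ?_⟩
    · apply isIntAt_qval_le; rw [← lP_eq_qval_sct]; exact hle
    · rw [show ((1:ℤ):ℚ) = 1 by norm_num, abs_of_nonneg (sct_nonneg _)]
      exact le_of_lt (sct_lt_one _)
    · show p + ((sct (q - p) : DyadicSubgroup) : Prufer2) = q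
      rw [mk_sct, add_comm]
      exact sub_add_cancel q p

lemma floor_dist (a b : ℝ) : |((⌊a⌋:ℝ)) - ((⌊b⌋:ℝ))| ≤ |a - b| + 1 := by
  rw [abs_le]
  constructor
  · linarith [Int.lt_floor_add_one a, Int.floor_le b, neg_abs_le (a - b)]
  · linarith [Int.floor_le a, Int.lt_floor_add_one b, le_abs_self (a - b)]

end Stmt6Aux

open Stmt6Aux in
/-- The exact sequence `0 → ℤ → ℤ[1/2] → ℤ(2^∞) → 0` coarsely splits, with `ℤ` carrying
its standard word metric. -/
theorem stmt6 :
    ∃ (dD : DyadicSubgroup → DyadicSubgroup → ℝ) (dP : Prufer2 → Prufer2 → ℝ),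
      IsProperInvAddMetric dD ∧ IsProperInvAddMetric dP ∧
      ∃ f : DyadicSubgroup → ℤ × Prufer2,
        IsCoarseEquiv dD
          (fun p q => |((p.1 : ℝ)) - ((q.1 : ℝ))| + dP p.2 q.2) f ∧
        (∀ m : ℤ, f (intToDyadic m) = (m, 0)) ∧
        ∀ x : DyadicSubgroup, (f x).2 = toPrufer2 x := by
  refine ⟨dD, dP, dD_proper, dP_proper,
    fun x => (⌊(x:ℚ)⌋, toPrufer2 x), ⟨?_, ?_⟩, fun m => ?_, fun x => rfl⟩
  · -- f is coarse
    intro δ hδ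
    refine ⟨2*δ + 1, fun x y hxy => ?_⟩
    have hnn1 := abs_nonneg (((y:ℚ):ℝ) - ((x:ℚ):ℝ))
    have hnn2 := Nat.cast_nonneg (α := ℝ) (qval (y - x))
    have hxy' : |((y:ℚ):ℝ) - ((x:ℚ):ℝ)| + (qval (y - x) : ℝ) ≤ δ := hxy
    show |((⌊(x:ℚ)⌋ : ℤ):ℝ) - ((⌊(y:ℚ)⌋ : ℤ):ℝ)| + dP (toPrufer2 x) (toPrufer2 y) ≤ 2*δ + 1
    rw [dP_mk]
    have hfl : |((⌊(x:ℚ)⌋ : ℤ):ℝ) - ((⌊(y:ℚ)⌋ : ℤ):ℝ)| ≤ |((x:ℚ):ℝ) - ((y:ℚ):ℝ)| + 1 := by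
      have := floor_dist ((x:ℚ):ℝ) ((y:ℚ):ℝ)
      rwa [Rat.floor_cast, Rat.floor_cast] at this
    rw [abs_sub_comm ((x:ℚ):ℝ)] at hfl
    linarith
  · -- coarse inverse
    refine ⟨fun y => intToDyadic y.1 + sct y.2, ?_, ⟨2, fun x => ?_⟩, ⟨0, ?_⟩⟩
    · -- g is coarse
      intro δ hδ
      refine ⟨2*δ + 2, ?_⟩
      rintro ⟨m, p⟩ ⟨n, q⟩ h
      have h' : |((m:ℤ):ℝ) - ((n:ℤ):ℝ)| + dP p q ≤ δ := h
      have h0 : (0:ℝ) ≤ dP p q := Nat.cast_nonneg _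
      have h0' := abs_nonneg (((m:ℤ):ℝ) - ((n:ℤ):ℝ))
      have h1 : |((m:ℤ):ℝ) - ((n:ℤ):ℝ)| ≤ δ := by linarith
      have h2 : (lP (q - p) : ℝ) ≤ δ := by
        have : dP p q = (lP (q - p) : ℝ) := rfl
        linarith [this ▸ (by linarith : dP p q ≤ δ)]
      show dD (intToDyadic m + sct p) (intToDyadic n + sct q) ≤ 2*δ + 2
      unfold dD
      have hsub : intToDyadic n + sct q - (intToDyadic m + sct p)
          = sct q - sct p + (intToDyadic n - intToDyadic m) := by abel
      have hmem : intToDyadic n - intToDyadic m ∈ IntSub :=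
        sub_mem (intToDyadic_mem n) (intToDyadic_mem m)
      have hqv : qval (intToDyadic n + sct q - (intToDyadic m + sct p)) = lP (q - p) := by
        rw [hsub, qval_add_int _ hmem, ← lP_mk, QuotientAddGroup.mk_sub, mk_sct, mk_sct]
      rw [hqv]
      have e1 : ((intToDyadic n + sct q : DyadicSubgroup) : ℚ) = (n:ℚ) + ((sct q : DyadicSubgroup):ℚ) := rfl
      have e2 : ((intToDyadic m + sct p : DyadicSubgroup) : ℚ) = (m:ℚ) + ((sct p : DyadicSubgroup):ℚ) := rfl
      have s1 : (0:ℝ) ≤ (((sct p : DyadicSubgroup):ℚ):ℝ) := by exact_mod_cast sct_nonneg p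
      have s2 : (((sct p : DyadicSubgroup):ℚ):ℝ) < 1 := by exact_mod_cast sct_lt_one p
      have s3 : (0:ℝ) ≤ (((sct q : DyadicSubgroup):ℚ):ℝ) := by exact_mod_cast sct_nonneg q
      have s4 : (((sct q : DyadicSubgroup):ℚ):ℝ) < 1 := by exact_mod_cast sct_lt_one q
      have habs : |(((intToDyadic n + sct q : DyadicSubgroup):ℚ):ℝ) -
          (((intToDyadic m + sct p : DyadicSubgroup):ℚ):ℝ)| ≤ δ + 1 := by
        rw [e1, e2]
        push_cast
        rw [abs_le] at h1 ⊢
        constructor <;> [skip; skip] <;>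
          · obtain ⟨ha, hb⟩ := h1
            push_cast at ha hb ⊢
            linarith
      linarith
    · -- g ∘ f close to id
      show dD (intToDyadic ⌊(x:ℚ)⌋ + sct (toPrufer2 x)) x ≤ 2
      set a := intToDyadic ⌊(x:ℚ)⌋ + sct (toPrufer2 x) with ha
      have hmk : (a : Prufer2) = (x : Prufer2) := by
        rw [ha, QuotientAddGroup.mk_add, mk_intToDyadic, zero_add, mk_sct]
        rfl
      have hmem : x - a ∈ IntSub := by
        apply (QuotientAddGroup.eq_zero_iff _).mp
        rw [QuotientAddGroup.mk_sub, hmk, sub_self]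
      have hqv : qval (x - a) = 0 := qval_eq_zero_iff.mpr hmem
      have e : ((a : DyadicSubgroup):ℚ) = (⌊(x:ℚ)⌋ : ℚ) + ((sct (toPrufer2 x) : DyadicSubgroup):ℚ) := rfl
      have f1 := Int.fract_nonneg ((x:ℚ))
      have f2 := Int.fract_lt_one ((x:ℚ))
      rw [Int.fract] at f1 f2
      have s1 := sct_nonneg (toPrufer2 x)
      have s2 := sct_lt_one (toPrufer2 x)
      have habs : |((x:ℚ):ℝ) - ((a:ℚ):ℝ)| ≤ 1 := by
        have hq : |(x:ℚ) - (a:ℚ)| ≤ 1 := by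
          rw [e, abs_le]
          constructor <;> linarith
        calc |((x:ℚ):ℝ) - ((a:ℚ):ℝ)| = ((|(x:ℚ) - (a:ℚ)| : ℚ) : ℝ) := by push_cast; ring_nf
          _ ≤ 1 := by exact_mod_cast hq
      show |((x:ℚ):ℝ) - ((a:ℚ):ℝ)| + (qval (x - a) : ℝ) ≤ 2
      rw [hqv]
      norm_num
      linarith
    · -- f ∘ g = id
      rintro ⟨m, p⟩
      have hco : ((intToDyadic m + sct p : DyadicSubgroup):ℚ) = (m:ℚ) + ((sct p : DyadicSubgroup):ℚ) := rfl
      have hfl : ⌊((intToDyadic m + sct p : DyadicSubgroup):ℚ)⌋ = m := by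
        rw [hco, Int.floor_intCast_add]
        have : ⌊((sct p : DyadicSubgroup):ℚ)⌋ = 0 :=
          Int.floor_eq_zero_iff.mpr ⟨sct_nonneg p, sct_lt_one p⟩
        rw [this, add_zero]
      have hmk2 : toPrufer2 (intToDyadic m + sct p) = p := by
        show ((intToDyadic m + sct p : DyadicSubgroup) : Prufer2) = p
        rw [QuotientAddGroup.mk_add, mk_intToDyadic, zero_add, mk_sct]
      show |((⌊((intToDyadic m + sct p : DyadicSubgroup):ℚ)⌋ : ℤ):ℝ) - ((m:ℤ):ℝ)| +
        dP (toPrufer2 (intToDyadic m + sct p)) p ≤ 0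
      rw [hfl, hmk2, sub_self, abs_zero, zero_add]
      show (lP (p - p) : ℝ) ≤ 0
      rw [sub_self, lP_zero]
      norm_num
  · -- f on integers
    refine Prod.ext ?_ ?_
    · show ⌊((intToDyadic m : DyadicSubgroup):ℚ)⌋ = m
      show ⌊((m:ℤ):ℚ)⌋ = m
      exact Int.floor_intCast m
    · exact mk_intToDyadic m
end

section
/- A countable group G with a proper left invariant metric is locally finite if and only if its growth type is at most a constant function, i.e. there is C > 0 such that for every s > 0 and every g ∈ G, the growth function n ↦ #(A_g^{(n,s)}) is bounded by a fixed constant type (gr_{(s,g)} ⪯ 1). -/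
/-- The `(n,s)`-connected component of `x`: points reachable from `x` by an `s`-scale
chain of length `n`. -/
def reachSet {X : Type*} (d : X → X → ℝ) (s : ℝ) (n : ℕ) (x : X) : Set X :=
  {y | ∃ c : ℕ → X, c 0 = x ∧ c n = y ∧ ∀ i < n, d (c i) (c (i + 1)) ≤ s}

/-- `(X, d)` has growth type at most `f` : every growth function
`n ↦ #(A_x^{(n,s)})` satisfies `gr ⪯ f`, i.e. `gr n ≤ C * f (C * n)` for large `n`. -/
def GrowthTypeAtMost {X : Type*} (d : X → X → ℝ) (f : ℕ → ℕ) : Prop :=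
  ∀ s : ℝ, 0 < s → ∀ x : X, ∃ C : ℕ, 0 < C ∧ ∃ N : ℕ, ∀ n, N ≤ n →
    (reachSet d s n x).ncard ≤ C * f (C * n)

section Aux

variable {G : Type*} [Group G] (d : G → G → ℝ)

lemma aux_self_mem (hd : IsProperLeftInvMetric d) (s : ℝ) (hs : 0 ≤ s) (n : ℕ) (x : G) :
    x ∈ reachSet d s n x := by
  refine ⟨fun _ => x, rfl, rfl, fun i _ => ?_⟩
  rw [(hd.2.1 x x).2 rfl]
  exact hs

lemma aux_mono (hd : IsProperLeftInvMetric d) {s : ℝ} (hs : 0 ≤ s) {m n : ℕ} (hmn : m ≤ n)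
    (x : G) : reachSet d s m x ⊆ reachSet d s n x := by
  induction n with
  | zero => simp [Nat.le_zero.mp hmn]
  | succ n ih =>
    rcases Nat.le_succ_iff.mp hmn with h | h
    · refine (ih h).trans ?_
      intro y hy
      obtain ⟨c, h0, hn, hstep⟩ := hy
      refine ⟨fun i => c (min i n), by simp [h0], by simp [hn], fun i hi => ?_⟩
      by_cases hin : i < n
      · have h1 : min i n = i := by omega
        have h2 : min (i + 1) n = i + 1 := by omega
        simp only [h1, h2]; exact hstep i hin
      · have h1 : min i n = n := by omega
        have h2 : min (i + 1) n = n := by omega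
        simp only [h1, h2, (hd.2.1 (c n) (c n)).2 rfl]; exact hs
    · simp [h]

/-- points in `reachSet d s n x` are within distance `n*s` of `x`. -/
lemma aux_ball (hd : IsProperLeftInvMetric d) {s : ℝ} (n : ℕ) (x y : G)
    (hy : y ∈ reachSet d s n x) : d x y ≤ n * s := by
  induction n generalizing y with
  | zero =>
    obtain ⟨c, h0, hn, _⟩ := hy
    simp [← h0, ← hn, (hd.2.1 _ _).2 rfl]
  | succ n ih =>
    obtain ⟨c, h0, hn, hstep⟩ := hy
    have h1 : c n ∈ reachSet d s n x := ⟨c, h0, rfl, fun i hi => hstep i (by omega)⟩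
    calc d x y ≤ d x (c n) + d (c n) y := hd.2.2.2.1 x (c n) y
      _ ≤ n * s + s := by
          have := hstep n (by omega)
          rw [← hn]; exact add_le_add (ih (c n) h1) this
      _ = (n + 1 : ℕ) * s := by push_cast; ring

lemma aux_finite (hd : IsProperLeftInvMetric d) (s : ℝ) (n : ℕ) (x : G) :
    (reachSet d s n x).Finite :=
  (hd.2.2.2.2.2 x (n * s)).subset fun y hy => aux_ball d hd n x y hy

end Aux

/-- A countable group with a proper left invariant metric is locally finite iff its growth
type is at most a constant function. -/
theorem stmt8 {G : Type*} [Group G] [Countable G] (d : G → G → ℝ)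
    (hd : IsProperLeftInvMetric d) :
    (∀ S : Finset G, ((Subgroup.closure (S : Set G)) : Set G).Finite) ↔
      GrowthTypeAtMost d (fun _ => 1) := by
  obtain ⟨hpos, heq, hsymm, htri, hinv, hproper⟩ := hd
  have hdd : IsProperLeftInvMetric d := ⟨hpos, heq, hsymm, htri, hinv, hproper⟩
  constructor
  · -- locally finite → constant growth
    intro hlf s hs x
    have hBfin : {t : G | d 1 t ≤ s}.Finite := hproper 1 s
    set B : Finset G := hBfin.toFinset with hB
    have hcl : ((Subgroup.closure (B : Set G)) : Set G).Finite := hlf B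
    refine ⟨((Subgroup.closure (B : Set G)) : Set G).ncard + 1, Nat.succ_pos _, 0,
      fun n _ => ?_⟩
    -- reachSet ⊆ x • closure B
    have hsub : ∀ y ∈ reachSet d s n x, x⁻¹ * y ∈ Subgroup.closure (B : Set G) := by
      intro y hy
      obtain ⟨c, h0, hn, hstep⟩ := hy
      have key : ∀ m ≤ n, x⁻¹ * c m ∈ Subgroup.closure (B : Set G) := by
        intro m hm
        induction m with
        | zero => simpa [h0] using Subgroup.one_mem _
        | succ m ih =>
          have hmem : x⁻¹ * c m ∈ Subgroup.closure (B : Set G) := ih (by omega)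
          have ht : (c m)⁻¹ * c (m + 1) ∈ (B : Set G) := by
            have h2 : d 1 ((c m)⁻¹ * c (m + 1)) = d (c m) (c (m + 1)) := by
              have := hinv (c m) 1 ((c m)⁻¹ * c (m + 1))
              simpa [mul_assoc] using this.symm
            simp only [hB, Set.Finite.coe_toFinset, Set.mem_setOf_eq]
            rw [h2]; exact hstep m hm
          have := Subgroup.mul_mem _ hmem (Subgroup.subset_closure ht)
          simpa [mul_assoc] using this
      rw [← hn]; exact key n le_rfl
    have himg : reachSet d s n x ⊆
        (fun g => x * g) '' ((Subgroup.closure (B : Set G)) : Set G) := by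
      intro y hy
      exact ⟨x⁻¹ * y, hsub y hy, by group⟩
    calc (reachSet d s n x).ncard
        ≤ ((fun g => x * g) '' ((Subgroup.closure (B : Set G)) : Set G)).ncard :=
          Set.ncard_le_ncard himg (hcl.image _)
      _ ≤ ((Subgroup.closure (B : Set G)) : Set G).ncard := Set.ncard_image_le hcl
      _ ≤ (((Subgroup.closure (B : Set G)) : Set G).ncard + 1) * 1 := by omega
  · -- constant growth → locally finite
    intro hg S
    -- choose a scale s dominating distances to generators and their inverses
    obtain ⟨b, hb⟩ : ∃ b : ℝ, ∀ t ∈ S, max (d 1 t) (d 1 t⁻¹) ≤ b := by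
      obtain ⟨b, hb⟩ := (S.finite_toSet.image (fun t => max (d 1 t) (d 1 t⁻¹))).bddAbove
      exact ⟨b, fun t ht => hb ⟨t, ht, rfl⟩⟩
    set s : ℝ := max b 0 + 1 with hsdef
    have hs : 0 < s := by positivity
    have hdle : ∀ t ∈ S, d 1 t ≤ s ∧ d 1 t⁻¹ ≤ s := by
      intro t ht
      have h1 := hb t ht
      have h2 := le_max_left (d 1 t) (d 1 t⁻¹)
      have h3 := le_max_right (d 1 t) (d 1 t⁻¹)
      have h4 := le_max_left b (0 : ℝ)
      constructor <;> simp only [hsdef] <;> linarith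
    -- every element of the closure is in some reachSet d s n 1
    have hreach : ∀ y ∈ Subgroup.closure (S : Set G), ∃ n, y ∈ reachSet d s n 1 := by
      intro y hy
      induction hy using Subgroup.closure_induction with
      | mem t ht =>
        refine ⟨1, fun i => if i = 0 then 1 else t, by simp, by simp, fun i hi => ?_⟩
        interval_cases i
        simpa using (hdle t ht).1
      | one => exact ⟨0, aux_self_mem d hdd s hs.le 0 1⟩
      | mul y z hy' hz' ihy ihz =>
        obtain ⟨m, c₁, hc₁0, hc₁m, hc₁step⟩ := ihy
        obtain ⟨k, c₂, hc₂0, hc₂k, hc₂step⟩ := ihz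
        refine ⟨m + k, fun i => if i ≤ m then c₁ i else y * c₂ (i - m), by simp [hc₁0],
          ?_, fun i hi => ?_⟩
        · by_cases hk : k = 0
          · simp only [hk, Nat.add_zero, if_pos le_rfl, hc₁m]
            rw [← hc₂k, hk, hc₂0, mul_one]
          · simp only [if_neg (by omega : ¬ m + k ≤ m)]
            rw [Nat.add_sub_cancel_left, hc₂k]
        · by_cases him : i + 1 ≤ m
          · simp only [if_pos (by omega : i ≤ m), if_pos him]
            exact hc₁step i (by omega)
          · have h2 : (if i ≤ m then c₁ i else y * c₂ (i - m)) = y * c₂ (i - m) := by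
              by_cases hi' : i ≤ m
              · have hieq : i = m := by omega
                subst hieq
                simp [hc₁m, hc₂0]
              · simp [hi']
            simp only [h2, if_neg him]
            have h3 : i + 1 - m = (i - m) + 1 := by omega
            rw [h3, hinv]
            exact hc₂step (i - m) (by omega)
      | inv y hy' ihy =>
        obtain ⟨m, c, hc0, hcm, hcstep⟩ := ihy
        refine ⟨m, fun i => y⁻¹ * c (m - i), by simp [hcm], by simp [hc0], fun i hi => ?_⟩
        rw [hinv]
        have h1 : m - i = (m - (i + 1)) + 1 := by omega
        rw [h1, hsymm]
        exact hcstep (m - (i + 1)) (by omega)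
    -- use the growth bound
    obtain ⟨C, hC, N, hN⟩ := hg s hs 1
    by_contra hinf
    have hinf' : ((Subgroup.closure (S : Set G)) : Set G).Infinite := hinf
    obtain ⟨t, hts, htfin, htcard⟩ := hinf'.exists_subset_ncard_eq (C + 1)
    -- t is finite, so it lies in a single reachSet
    have hM : ∃ M, ∀ y ∈ t, y ∈ reachSet d s M 1 := by
      have key : ∀ u : Set G, u.Finite → u ⊆ ((Subgroup.closure (S : Set G)) : Set G) →
          ∃ M, ∀ y ∈ u, y ∈ reachSet d s M 1 := by
        intro u hu
        refine Set.Finite.induction_on (motive := fun u _ => u ⊆ ((Subgroup.closure (S : Set G)) : Set G) →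
            ∃ M, ∀ y ∈ u, y ∈ reachSet d s M 1) u hu (fun _ => ⟨0, by simp⟩) ?_
        rintro a v hav hvfin ih hsub'
        obtain ⟨M₁, hM₁⟩ := ih (fun y hy => hsub' (Set.mem_insert_of_mem a hy))
        obtain ⟨M₂, hM₂⟩ := hreach a (hsub' (Set.mem_insert a v))
        refine ⟨max M₁ M₂, fun y hy => ?_⟩
        rcases hy with rfl | hy
        · exact aux_mono d hdd hs.le (le_max_right M₁ M₂) 1 hM₂
        · exact aux_mono d hdd hs.le (le_max_left M₁ M₂) 1 (hM₁ y hy)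
      exact key t htfin hts
    obtain ⟨M, hM⟩ := hM
    have hsub : t ⊆ reachSet d s (max M N) 1 := fun y hy =>
      aux_mono d hdd hs.le (le_max_left M N) 1 (hM y hy)
    have hle := Set.ncard_le_ncard hsub (aux_finite d hdd s (max M N) 1)
    have hbound := hN (max M N) (le_max_right M N)
    simp only [mul_one] at hbound
    omega
end

section
/- Let (G, d_G) be a countable group with a proper left invariant metric and f : ℕ → ℕ a function. If every finitely generated subgroup H of G has growth type at most f (with respect to the restricted metric), then G has growth type at most f. -/
/-- If every finitely generated subgroup of `G` has growth type at most `f` (with the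
restricted metric), then `G` has growth type at most `f`. -/
theorem stmt9 {G : Type*} [Group G] [Countable G] (d : G → G → ℝ)
    (hd : IsProperLeftInvMetric d) (f : ℕ → ℕ)
    (hsub : ∀ H : Subgroup G, H.FG →
      GrowthTypeAtMost (fun x y : H => d (x : G) (y : G)) f) :
    GrowthTypeAtMost d f := by
  obtain ⟨-, heq, -, htri, hinv, hprop⟩ := hd
  intro s hs x
  set S : Set G := {g | d 1 g ≤ s} with hS
  set H : Subgroup G := Subgroup.closure (S ∪ {x}) with hH
  have hFG : H.FG := (Subgroup.fg_iff H).2 ⟨S ∪ {x}, rfl,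
    ((hprop 1 s).union (Set.finite_singleton x))⟩
  have hxH : x ∈ H := Subgroup.subset_closure (Or.inr rfl)
  -- any step of size ≤ s starting in H stays in H
  have hstep : ∀ g h : G, g ∈ H → d g h ≤ s → h ∈ H := by
    intro g h hg hdgh
    have h1 : d 1 (g⁻¹ * h) ≤ s := by
      have := hinv g 1 (g⁻¹ * h)
      rw [mul_one, mul_inv_cancel_left] at this
      rw [← this]; exact hdgh
    have : g⁻¹ * h ∈ H := Subgroup.subset_closure (Or.inl h1)
    have := H.mul_mem hg this
    rwa [mul_inv_cancel_left] at this
  obtain ⟨C, hC, N, hN⟩ := hsub H hFG s hs ⟨x, hxH⟩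
  refine ⟨C, hC, N, fun n hn => ?_⟩
  refine le_trans ?_ (hN n hn)
  have hsub' : reachSet d s n x ⊆
      Subtype.val '' (reachSet (fun a b : H => d (a : G) (b : G)) s n ⟨x, hxH⟩) := by
    rintro y ⟨c, hc0, hcn, hcs⟩
    -- all chain points up to n are in H
    have hmem : ∀ i, i ≤ n → c i ∈ H := by
      intro i
      induction i with
      | zero => intro _; rw [hc0]; exact hxH
      | succ k ih =>
        intro hk
        exact hstep _ _ (ih (Nat.le_of_succ_le hk)) (hcs k hk)
    refine ⟨⟨y, hcn ▸ hmem n le_rfl⟩, ⟨fun i => ⟨c (min i n), hmem _ (min_le_right _ _)⟩,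
      ?_, ?_, ?_⟩, rfl⟩
    · simp [hc0]
    · simp [hcn]
    · intro i hi
      simp only
      rw [min_eq_left hi.le, min_eq_left hi]
      exact hcs i hi
  -- finiteness of the target set
  have hbnd : ∀ y ∈ reachSet d s n x, d x y ≤ n * s := by
    rintro y ⟨c, hc0, hcn, hcs⟩
    have : ∀ i ≤ n, d x (c i) ≤ i * s := by
      intro i
      induction i with
      | zero =>
        intro _
        simp [hc0, (heq x x).2 rfl]
      | succ k ih =>
        intro hk
        have h1 := htri x (c k) (c (k + 1))
        have h2 := hcs k hk
        have h3 := ih (Nat.le_of_succ_le hk)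
        push_cast
        nlinarith
    simpa [hcn] using this n le_rfl
  have hfin : (Subtype.val '' (reachSet (fun a b : H => d (a : G) (b : G)) s n ⟨x, hxH⟩)).Finite := by
    apply (hprop x (n * s)).subset
    rintro y ⟨⟨z, hz⟩, hzr, rfl⟩
    apply hbnd
    obtain ⟨c, hc0, hcn, hcs⟩ := hzr
    exact ⟨fun i => (c i : G), congrArg Subtype.val hc0, congrArg Subtype.val hcn, hcs⟩
  calc (reachSet d s n x).ncard
      ≤ (Subtype.val '' (reachSet (fun a b : H => d (a : G) (b : G)) s n ⟨x, hxH⟩)).ncard :=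
        Set.ncard_le_ncard hsub' hfin
    _ = (reachSet (fun a b : H => d (a : G) (b : G)) s n ⟨x, hxH⟩).ncard :=
        Set.ncard_image_of_injective _ Subtype.val_injective
end

section
/- Let (G, d_G) and (H, d_H) be countable groups with proper left invariant metrics, let f : ℕ → ℕ, and suppose G has growth type at most f. If there exists a coarse embedding φ : H → G, then H has growth type at most f. -/
/-- Points reachable in `n` steps of size `≤ s` are within distance `n*s`. -/
lemma reachSet_subset_ball {X : Type*} (d : X → X → ℝ)
    (tri : ∀ x y z, d x z ≤ d x y + d y z) (refl0 : ∀ x, d x x = 0)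
    (s : ℝ) (n : ℕ) (x : X) :
    reachSet d s n x ⊆ {y | d x y ≤ n * s} := by
  rintro y ⟨c, h0, hn, hstep⟩
  have key : ∀ m, m ≤ n → d x (c m) ≤ m * s := by
    intro m
    induction m with
    | zero => intro _; simp [← h0, refl0]
    | succ k ih =>
      intro hk
      have h1 := ih (by omega)
      have h2 := hstep k (by omega)
      have h3 := tri x (c k) (c (k + 1))
      push_cast
      push_cast at h1
      nlinarith
  have := key n le_rfl
  rw [hn] at this
  exact this

/-- Reach sets are monotone in the number of steps (pad with constant steps). -/
lemma reachSet_mono {X : Type*} (d : X → X → ℝ) (refl0 : ∀ x, d x x = 0)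
    {s : ℝ} (hs : 0 ≤ s) {n m : ℕ} (hnm : n ≤ m) (x : X) :
    reachSet d s n x ⊆ reachSet d s m x := by
  rintro y ⟨c, h0, hn, hstep⟩
  refine ⟨fun i => c (min i n), by simpa using h0, by simpa [min_eq_right hnm] using hn, ?_⟩
  intro i _
  show d (c (min i n)) (c (min (i + 1) n)) ≤ s
  rcases lt_or_ge i n with h | h
  · rw [min_eq_left h.le, min_eq_left (by omega)]
    exact hstep i h
  · rw [min_eq_right h, min_eq_right (by omega)]
    simpa [refl0] using hs

/-- Growth type is monotone under coarse embeddings. -/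
theorem stmt10 {G H : Type*} [Group G] [Group H] [Countable G] [Countable H]
    (dG : G → G → ℝ) (dH : H → H → ℝ)
    (hdG : IsProperLeftInvMetric dG) (hdH : IsProperLeftInvMetric dH)
    (f : ℕ → ℕ) (hG : GrowthTypeAtMost dG f)
    (φ : H → G)
    (hφ₁ : ∀ δ : ℝ, 0 < δ → ∃ ε : ℝ, ∀ x y, dH x y ≤ δ → dG (φ x) (φ y) ≤ ε)
    (hφ₂ : ∀ R : ℝ, 0 < R → ∃ S : ℝ, ∀ x y, dG (φ x) (φ y) ≤ R → dH x y ≤ S) :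
    GrowthTypeAtMost dH f := by
  classical
  obtain ⟨dG0, dGeq, dGsym, dGtri, dGinv, dGprop⟩ := hdG
  obtain ⟨dH0, dHeq, dHsym, dHtri, dHinv, dHprop⟩ := hdH
  have dGrefl : ∀ g : G, dG g g = 0 := fun g => (dGeq g g).2 rfl
  have dHrefl : ∀ h : H, dH h h = 0 := fun h => (dHeq h h).2 rfl
  intro s hs x
  obtain ⟨ε, hε⟩ := hφ₁ s hs
  have hε'pos : (0:ℝ) < max ε 1 := lt_of_lt_of_le one_pos (le_max_right _ _)
  obtain ⟨S, hS⟩ := hφ₂ 1 one_pos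
  have hS0 : 0 ≤ S := by
    have := hS x x (by rw [dGrefl]; norm_num)
    rwa [dHrefl] at this
  have hBfin : ({y : H | dH 1 y ≤ S}).Finite := dHprop 1 S
  set M : ℕ := ({y : H | dH 1 y ≤ S}).ncard with hM
  have hM1 : 1 ≤ M := by
    have h1 : (1:H) ∈ {y : H | dH 1 y ≤ S} := by
      simp only [Set.mem_setOf_eq, dHrefl]; exact hS0
    have := (Set.ncard_pos hBfin).2 ⟨1, h1⟩
    omega
  obtain ⟨C, hCpos, N, hN⟩ := hG (max ε 1) hε'pos (φ x)
  refine ⟨M * C, Nat.mul_pos hM1 hCpos, N, ?_⟩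
  intro n hn
  -- the reach set in H is finite
  have hAfin : (reachSet dH s n x).Finite :=
    (dHprop x (n * s)).subset (reachSet_subset_ball dH dHtri dHrefl s n x)
  set sA : Finset H := hAfin.toFinset with hsA
  -- image of the reach set lands in a reach set in G
  have himg : φ '' (reachSet dH s n x) ⊆ reachSet dG (max ε 1) (M * n) (φ x) := by
    rintro g ⟨y, ⟨c, h0, hcn, hstep⟩, rfl⟩
    apply reachSet_mono dG dGrefl hε'pos.le (Nat.le_mul_of_pos_left n hM1) (φ x)
    exact ⟨fun i => φ (c i), by simp [h0], by simp [hcn], fun i hi =>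
      le_trans (hε _ _ (hstep i hi)) (le_max_left _ _)⟩
  have hRfin : (reachSet dG (max ε 1) (M * n) (φ x)).Finite :=
    (dGprop (φ x) ((M * n : ℕ) * max ε 1)).subset
      (reachSet_subset_ball dG dGtri dGrefl _ _ _)
  -- fibers of φ on sA have size at most M
  have hfib : ∀ b ∈ sA.image φ, (sA.filter fun a => φ a = b).card ≤ M := by
    intro b hb
    obtain ⟨a₀, _, ha₀⟩ := Finset.mem_image.1 hb
    have hsub : ↑(sA.filter fun a => φ a = b) ⊆ (fun y => a₀ * y) '' {y | dH 1 y ≤ S} := by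
      intro a ha
      simp only [Finset.coe_filter, Set.mem_setOf_eq] at ha
      refine ⟨a₀⁻¹ * a, ?_, by group⟩
      have h1 : dG (φ a) (φ a₀) ≤ 1 := by rw [ha.2, ha₀, dGrefl]; norm_num
      have h2 : dH a a₀ ≤ S := hS a a₀ h1
      show dH 1 (a₀⁻¹ * a) ≤ S
      have h3 := dHinv a₀ 1 (a₀⁻¹ * a)
      rw [mul_one, mul_inv_cancel_left] at h3
      rw [← h3, dHsym]
      exact h2
    calc (sA.filter fun a => φ a = b).card
        = (↑(sA.filter fun a => φ a = b) : Set H).ncard := (Set.ncard_coe_finset _).symm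
      _ ≤ ((fun y => a₀ * y) '' {y | dH 1 y ≤ S}).ncard :=
          Set.ncard_le_ncard hsub (hBfin.image _)
      _ = M := by rw [Set.ncard_image_of_injective _ (mul_right_injective a₀)]
  have hcount : sA.card ≤ M * (sA.image φ).card := Finset.card_le_mul_card_image sA M hfib
  have himgcard : (sA.image φ).card ≤ (reachSet dG (max ε 1) (M * n) (φ x)).ncard := by
    rw [← Set.ncard_coe_finset]
    apply Set.ncard_le_ncard _ hRfin
    intro g hg
    rw [Finset.coe_image] at hg
    obtain ⟨a, ha, rfl⟩ := hg
    rw [hsA, Set.Finite.coe_toFinset] at ha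
    exact himg ⟨a, ha, rfl⟩
  have hmain := hN (M * n) (le_trans hn (Nat.le_mul_of_pos_left n hM1))
  have hfineq : C * (M * n) = M * C * n := by ring
  calc (reachSet dH s n x).ncard = sA.card := by
        rw [hsA, Set.ncard_eq_toFinset_card _ hAfin]
    _ ≤ M * (sA.image φ).card := hcount
    _ ≤ M * (reachSet dG (max ε 1) (M * n) (φ x)).ncard := Nat.mul_le_mul_left M himgcard
    _ ≤ M * (C * f (C * (M * n))) := Nat.mul_le_mul_left M hmain
    _ = M * C * f (M * C * n) := by rw [hfineq]; ring
end

section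
/- Let (G, H) be an odd pair of countable abelian groups. Then the exact sequence 0 → H → G → G/H → 0 coarsely splits: there exist proper left invariant metrics d_H, d_G, d_{G/H} and a coarse equivalence f : (G, d_G) → (H ⊕ G/H, d_H ⊕ d_{G/H}) such that f restricted to H is the inclusion h ↦ (h, 0) and the composition of f with projection H ⊕ G/H → G/H equals the quotient map π : G → G/H. -/
open Pointwise

namespace CoarseAux

variable {A : Type*} [AddCommGroup A]

def iterAdd : ℕ → Set A → Set A
  | 0, _ => {0}
  | (n+1), s => iterAdd n s + s

lemma zero_mem_iterAdd {s : Set A} (h : (0:A) ∈ s) : ∀ n, (0:A) ∈ iterAdd n s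
  | 0 => rfl
  | (n+1) => by
      have := zero_mem_iterAdd h n
      simpa [iterAdd] using Set.add_mem_add this h

lemma iterAdd_mono {s t : Set A} (h : s ⊆ t) : ∀ n, iterAdd n s ⊆ iterAdd n t
  | 0 => le_rfl
  | (n+1) => Set.add_subset_add (iterAdd_mono h n) h

lemma mem_iterAdd_self {s : Set A} (h0 : (0:A) ∈ s) {x : A} (hx : x ∈ s) :
    x ∈ iterAdd 1 s := by
  have : (0:A) + x ∈ iterAdd 0 s + s :=
    Set.add_mem_add (Set.mem_singleton 0) hx
  simpa [iterAdd] using this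

lemma iterAdd_le {s : Set A} (h0 : (0:A) ∈ s) : ∀ {n m : ℕ}, n ≤ m →
    iterAdd n s ⊆ iterAdd m s := by
  intro n m h
  induction h with
  | refl => exact le_rfl
  | step _ ih =>
      intro x hx
      have : x + 0 ∈ iterAdd _ s + s := Set.add_mem_add (ih hx) h0
      simpa [iterAdd] using this

lemma add_mem_iterAdd {s : Set A} {x y : A} {n m : ℕ}
    (hx : x ∈ iterAdd n s) (hy : y ∈ iterAdd m s) : x + y ∈ iterAdd (n + m) s := by
  induction m generalizing y with
  | zero =>
      have : y = 0 := hy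
      simpa [this] using hx
  | succ m ih =>
      obtain ⟨a, ha, b, hb, rfl⟩ := hy
      have := ih ha
      have : (x + a) + b ∈ iterAdd (n + m) s + s := Set.add_mem_add this hb
      simpa [iterAdd, add_assoc] using this

lemma neg_mem_iterAdd {s : Set A} (hs : ∀ a ∈ s, -a ∈ s) {x : A} :
    ∀ {n}, x ∈ iterAdd n s → -x ∈ iterAdd n s := by
  intro n
  induction n generalizing x with
  | zero => intro hx; simp_all [iterAdd]
  | succ n ih =>
      rintro ⟨a, ha, b, hb, rfl⟩
      have : (-a) + (-b) ∈ iterAdd n s + s := Set.add_mem_add (ih ha) (hs b hb)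
      simpa [iterAdd, neg_add, add_comm] using this

lemma iterAdd_finite {s : Set A} (hs : s.Finite) : ∀ n, (iterAdd n s).Finite
  | 0 => Set.finite_singleton 0
  | (n+1) => (iterAdd_finite hs n).add hs

lemma exists_properMetric (A : Type*) [AddCommGroup A] [Countable A] :
    ∃ d : A → A → ℝ, IsProperInvAddMetric d := by
  obtain ⟨e, he⟩ := exists_surjective_nat A
  set F : ℕ → Set A := fun n => {a | a = 0 ∨ ∃ k < n, a = e k ∨ a = -e k} with hF
  have hF0 : ∀ n, (0:A) ∈ F n := fun n => Or.inl rfl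
  have hFmono : ∀ {n m}, n ≤ m → F n ⊆ F m := by
    rintro n m h a (rfl | ⟨k, hk, hke⟩)
    · exact Or.inl rfl
    · exact Or.inr ⟨k, lt_of_lt_of_le hk h, hke⟩
  have hFneg : ∀ n, ∀ a ∈ F n, -a ∈ F n := by
    rintro n a (rfl | ⟨k, hk, (rfl | rfl)⟩)
    · exact Or.inl (by simp)
    · exact Or.inr ⟨k, hk, Or.inr rfl⟩
    · exact Or.inr ⟨k, hk, Or.inl (by simp)⟩
  have hFfin : ∀ n, (F n).Finite := by
    intro n
    have : F n ⊆ insert 0 ((e '' Set.Iio n) ∪ ((fun k => -e k) '' Set.Iio n)) := by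
      rintro a (rfl | ⟨k, hk, (rfl | rfl)⟩)
      · exact Set.mem_insert _ _
      · exact Set.mem_insert_of_mem _ (Or.inl ⟨k, hk, rfl⟩)
      · exact Set.mem_insert_of_mem _ (Or.inr ⟨k, hk, rfl⟩)
    exact Set.Finite.subset (((Set.finite_Iio n).image e).union
      ((Set.finite_Iio n).image _) |>.insert 0) this
  set B : ℕ → Set A := fun n => iterAdd n (F n) with hB
  have hBmono : ∀ {n m}, n ≤ m → B n ⊆ B m := fun {n m} h =>
    (iterAdd_mono (hFmono h) n).trans (iterAdd_le (hF0 m) h)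
  have hex : ∀ x : A, ∃ n, x ∈ B n := by
    intro x
    obtain ⟨k, rfl⟩ := he x
    have hmem : e k ∈ F (k+1) := Or.inr ⟨k, Nat.lt_succ_self k, Or.inl rfl⟩
    exact ⟨k + 1, iterAdd_le (hF0 (k+1)) (Nat.one_le_iff_ne_zero.mpr (Nat.succ_ne_zero k))
      (mem_iterAdd_self (hF0 (k+1)) hmem)⟩
  classical
  set L : A → ℕ := fun x => Nat.find (hex x) with hL
  have hLspec : ∀ x, x ∈ B (L x) := fun x => Nat.find_spec (hex x)
  have hLmin : ∀ x n, x ∈ B n → L x ≤ n := fun x n h => Nat.find_le h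
  have hLzero : L 0 = 0 := Nat.le_zero.mp (hLmin 0 0 (zero_mem_iterAdd (hF0 0) 0))
  have hLeqzero : ∀ x, L x = 0 → x = 0 := by
    intro x hx
    have := hLspec x
    rw [hx] at this
    exact this
  have hLadd : ∀ x y, L (x + y) ≤ L x + L y := by
    intro x y
    refine hLmin _ _ ?_
    have hx : x ∈ iterAdd (L x) (F (L x + L y)) :=
      iterAdd_mono (hFmono (Nat.le_add_right _ _)) _ (hLspec x)
    have hy : y ∈ iterAdd (L y) (F (L x + L y)) :=
      iterAdd_mono (hFmono (Nat.le_add_left _ _)) _ (hLspec y)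
    exact add_mem_iterAdd hx hy
  have hLneg : ∀ x, L (-x) ≤ L x := by
    intro x
    exact hLmin _ _ (neg_mem_iterAdd (hFneg (L x)) (hLspec x))
  have hLneg' : ∀ x : A, L (-x) = L x := by
    intro x
    refine le_antisymm (hLneg x) ?_
    have := hLneg (-x)
    simpa using this
  refine ⟨fun x y => (L (y - x) : ℝ), ?_, ?_, ?_, ?_, ?_, ?_⟩
  · intro x y; positivity
  · intro x y
    show ((L (y - x) : ℕ) : ℝ) = 0 ↔ x = y
    constructor
    · intro h
      have : L (y - x) = 0 := by exact_mod_cast h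
      have := hLeqzero _ this
      have : y = x := by
        have := sub_eq_zero.mp this
        exact this
      exact this.symm
    · rintro rfl; simp [hLzero]
  · intro x y
    show ((L (y - x) : ℕ) : ℝ) = ((L (x - y) : ℕ) : ℝ)
    have : x - y = -(y - x) := by abel
    rw [this, hLneg']
  · intro x y z
    show ((L (z - x) : ℕ) : ℝ) ≤ ((L (y - x) : ℕ) : ℝ) + ((L (z - y) : ℕ) : ℝ)
    have h1 : L (z - x) ≤ L (y - x) + L (z - y) := by
      have : z - x = (y - x) + (z - y) := by abel
      rw [this]
      exact hLadd _ _
    calc ((L (z - x) : ℝ)) ≤ ((L (y - x) + L (z - y) : ℕ) : ℝ) := by exact_mod_cast h1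
      _ = (L (y - x) : ℝ) + (L (z - y) : ℝ) := by push_cast; ring
  · intro g h₁ h₂
    show ((L (g + h₂ - (g + h₁)) : ℕ) : ℝ) = ((L (h₂ - h₁) : ℕ) : ℝ)
    have : g + h₂ - (g + h₁) = h₂ - h₁ := by abel
    rw [this]
  · intro x K
    have hsub : {y : A | ((L (y - x) : ℝ)) ≤ K} ⊆ (fun c => x + c) '' (B ⌊K⌋₊) := by
      intro y hy
      have h1 : L (y - x) ≤ ⌊K⌋₊ := Nat.le_floor hy
      exact ⟨y - x, hBmono h1 (hLspec (y - x)), by simp⟩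
    exact Set.Finite.subset ((iterAdd_finite (hFfin ⌊K⌋₊) ⌊K⌋₊).image _) hsub

end CoarseAux


namespace CoarseAux2

attribute [local instance] Classical.propDecidable

variable {G : Type*} [AddCommGroup G] (H : AddSubgroup G)

noncomputable def secG : G ⧸ H → G := fun q =>
  if q = 0 then 0 else (QuotientAddGroup.mk'_surjective H q).choose

lemma secG_spec (q : G ⧸ H) : QuotientAddGroup.mk' H (secG H q) = q := by
  unfold secG
  split
  · simp_all
  · exact (QuotientAddGroup.mk'_surjective H q).choose_spec

lemma secG_zero : secG H 0 = 0 := if_pos rfl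

def Qsub (e : ℕ → G ⧸ H) (n : ℕ) : AddSubgroup (G ⧸ H) :=
  AddSubgroup.closure (e '' {k | k ≤ n})

lemma mem_Qsub_self (e : ℕ → G ⧸ H) (k : ℕ) : e k ∈ Qsub H e k :=
  AddSubgroup.subset_closure ⟨k, by simp, rfl⟩

lemma Qsub_mono (e : ℕ → G ⧸ H) {n m : ℕ} (h : n ≤ m) : Qsub H e n ≤ Qsub H e m :=
  AddSubgroup.closure_mono (Set.image_mono fun k hk => le_trans hk h)

lemma Qsub_finite (e : ℕ → G ⧸ H) (htor : ∀ x : G ⧸ H, IsOfFinAddOrder x) (n : ℕ) :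
    (Qsub H e n : Set (G ⧸ H)).Finite := by
  have hfg : (Qsub H e n).FG := by
    rw [AddSubgroup.fg_iff]
    exact ⟨e '' {k | k ≤ n}, rfl, Set.Finite.image e (Set.finite_Iic n)⟩
  have : AddGroup.FG (Qsub H e n) := (AddGroup.fg_iff_addSubgroup_fg _).mpr hfg
  have htor' : AddMonoid.IsTorsion (Qsub H e n) := by
    intro x
    have := htor (x : G ⧸ H)
    obtain ⟨m, hm, hmx⟩ := (isOfFinAddOrder_iff_nsmul_eq_zero).mp this
    exact (isOfFinAddOrder_iff_nsmul_eq_zero).mpr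
      ⟨m, hm, by ext; simpa using hmx⟩
  have : Finite (Qsub H e n) := AddCommGroup.finite_of_fg_torsion _ htor'
  exact (Qsub H e n : Set (G ⧸ H)).toFinite

noncomputable def rho (e : ℕ → G ⧸ H) (m : ℕ) (q : G ⧸ H) : G ⧸ H :=
  if q ∈ Qsub H e m then 0
  else Quotient.out (QuotientAddGroup.mk' (Qsub H e m) q)

lemma rho_zero_of_mem (e : ℕ → G ⧸ H) (m : ℕ) {q : G ⧸ H} (h : q ∈ Qsub H e m) :
    rho H e m q = 0 := if_pos h

lemma sub_rho_mem (e : ℕ → G ⧸ H) (m : ℕ) (q : G ⧸ H) :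
    q - rho H e m q ∈ Qsub H e m := by
  unfold rho
  split
  · simpa
  · have key : QuotientAddGroup.mk' (Qsub H e m)
        (q - Quotient.out (QuotientAddGroup.mk' (Qsub H e m) q)) = 0 := by
      rw [map_sub]
      have h0 : (QuotientAddGroup.mk' (Qsub H e m))
          (Quotient.out (QuotientAddGroup.mk' (Qsub H e m) q))
          = QuotientAddGroup.mk' (Qsub H e m) q := by
        simp [QuotientAddGroup.mk'_apply, QuotientAddGroup.out_eq']
      rw [h0, sub_self]
    rw [QuotientAddGroup.mk'_apply, QuotientAddGroup.eq_zero_iff] at key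
    exact key

lemma rho_add (e : ℕ → G ⧸ H) (m : ℕ) (q r : G ⧸ H) (hr : r ∈ Qsub H e m) :
    rho H e m (q + r) = rho H e m q := by
  unfold rho
  by_cases hq : q ∈ Qsub H e m
  · rw [if_pos hq, if_pos (AddSubgroup.add_mem _ hq hr)]
  · have hqr : ¬ (q + r ∈ Qsub H e m) := fun h => hq (by
      have := AddSubgroup.sub_mem _ h hr
      simpa using this)
    rw [if_neg hq, if_neg hqr]
    congr 1
    rw [map_add]
    have h0 : QuotientAddGroup.mk' (Qsub H e m) r = 0 := by
      rw [QuotientAddGroup.mk'_apply, QuotientAddGroup.eq_zero_iff]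
      exact hr
    rw [h0, add_zero]

noncomputable def SS (e : ℕ → G ⧸ H) : ℕ → (G ⧸ H) → G
  | 0 => secG H
  | (m+1) => fun q => secG H (rho H e m q) + SS e m (q - rho H e m q)

lemma SS_sect (e : ℕ → G ⧸ H) : ∀ m q, QuotientAddGroup.mk' H (SS H e m q) = q
  | 0, q => secG_spec H q
  | (m+1), q => by
      simp only [SS]
      rw [map_add, secG_spec, SS_sect e m]
      abel

lemma SS_stable (e : ℕ → G ⧸ H) (m : ℕ) {q : G ⧸ H} (h : q ∈ Qsub H e m) :
    SS H e (m+1) q = SS H e m q := by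
  simp only [SS]
  rw [rho_zero_of_mem H e m h, secG_zero, sub_zero, zero_add]

lemma SS_zero (e : ℕ → G ⧸ H) : ∀ m, SS H e m 0 = 0
  | 0 => secG_zero H
  | (m+1) => by
      rw [SS_stable H e m (AddSubgroup.zero_mem _), SS_zero e m]

lemma SS_stable' (e : ℕ → G ⧸ H) {m : ℕ} {q : G ⧸ H} (h : q ∈ Qsub H e m) :
    ∀ {k}, m ≤ k → SS H e k q = SS H e m q := by
  intro k hk
  induction k, hk using Nat.le_induction with
  | base => rfl
  | succ k hk ih =>
      rw [SS_stable H e k (Qsub_mono H e hk h), ih]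

lemma SS_defect (e : ℕ → G ⧸ H) {n : ℕ} {r : G ⧸ H} (hr : r ∈ Qsub H e n) :
    ∀ {m}, n ≤ m → ∀ q ∈ Qsub H e m,
      SS H e m (q + r) - SS H e m q ∈
        (fun x => SS H e n (x + r) - SS H e n x) '' (Qsub H e n : Set (G ⧸ H)) := by
  intro m hm
  induction m, hm using Nat.le_induction with
  | base => exact fun q hq => ⟨q, hq, rfl⟩
  | succ m' hm' ih =>
      intro q _
      have hrm : r ∈ Qsub H e m' := Qsub_mono H e hm' hr
      have h1 : rho H e m' (q + r) = rho H e m' q := rho_add H e m' q r hrm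
      have h2 : q + r - rho H e m' q = (q - rho H e m' q) + r := by abel
      simp only [SS]
      rw [h1, h2]
      have h3 : secG H (rho H e m' q) + SS H e m' (q - rho H e m' q + r) -
          (secG H (rho H e m' q) + SS H e m' (q - rho H e m' q)) =
          SS H e m' (q - rho H e m' q + r) - SS H e m' (q - rho H e m' q) := by abel
      rw [h3]
      exact ih _ (sub_rho_mem H e m' q)

lemma exists_section [Countable G] (htor : ∀ x : G ⧸ H, IsOfFinAddOrder x) :
    ∃ s : (G ⧸ H) → G, (∀ q, QuotientAddGroup.mk' H (s q) = q) ∧ s 0 = 0 ∧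
      ∀ r : G ⧸ H, (Set.range (fun q => s (q + r) - s q)).Finite := by
  have : Countable (G ⧸ H) := Quotient.countable
  obtain ⟨e, he⟩ := exists_surjective_nat (G ⧸ H)
  classical
  set idx : (G ⧸ H) → ℕ := fun q => (he q).choose with hidx
  have hidx_spec : ∀ q, e (idx q) = q := fun q => (he q).choose_spec
  have hmem : ∀ q, q ∈ Qsub H e (idx q) := fun q => by
    have := mem_Qsub_self H e (idx q)
    rwa [hidx_spec q] at this
  set s : (G ⧸ H) → G := fun q => SS H e (idx q) q with hs
  have hs_eq : ∀ (m : ℕ) (q : G ⧸ H), q ∈ Qsub H e m → s q = SS H e m q := by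
    intro m q hq
    have h1 : SS H e (max m (idx q)) q = SS H e (idx q) q :=
      SS_stable' H e (hmem q) (le_max_right _ _)
    have h2 : SS H e (max m (idx q)) q = SS H e m q :=
      SS_stable' H e hq (le_max_left _ _)
    rw [hs]; dsimp only; rw [← h1, h2]
  refine ⟨s, ?_, ?_, ?_⟩
  · intro q; exact SS_sect H e (idx q) q
  · exact hs_eq (idx 0) 0 (hmem 0) ▸ SS_zero H e (idx 0) -- fix below maybe
  · intro r
    set n := idx r with hn
    have hrn : r ∈ Qsub H e n := hmem r
    have hsub : Set.range (fun q => s (q + r) - s q) ⊆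
        (fun x => SS H e n (x + r) - SS H e n x) '' (Qsub H e n : Set (G ⧸ H)) := by
      rintro _ ⟨q, rfl⟩
      set m := max n (max (idx q) (idx (q + r))) with hm
      have hqm : q ∈ Qsub H e m :=
        Qsub_mono H e (le_trans (le_max_left _ _) (le_max_right n _)) (hmem q)
      have hqrm : q + r ∈ Qsub H e m :=
        Qsub_mono H e (le_trans (le_max_right (idx q) _) (le_max_right n _)) (hmem (q + r))
      have h1 : s (q + r) = SS H e m (q + r) := hs_eq m _ hqrm
      have h2 : s q = SS H e m q := hs_eq m _ hqm
      show s (q + r) - s q ∈ _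
      rw [h1, h2]
      exact SS_defect H e hrn (le_max_left _ _) q hqm
    exact Set.Finite.subset (Set.Finite.image _ (Qsub_finite H e htor n)) hsub

end CoarseAux2


namespace CoarseAux3

lemma eq_zero_sub {A : Type*} [AddCommGroup A] {d : A → A → ℝ}
    (hd : IsProperInvAddMetric d) (x y : A) : d x y = d 0 (y - x) := by
  have := hd.2.2.2.2.1 x 0 (y - x)
  simpa using this

lemma bound_of_finite {A : Type*} [AddCommGroup A] {d : A → A → ℝ}
    (hd : IsProperInvAddMetric d) {T : Set A} (hT : T.Finite) :
    ∃ M : ℝ, ∀ t ∈ T, d 0 t ≤ M := by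
  obtain ⟨M, hM⟩ := (hT.image (d 0)).bddAbove
  exact ⟨M, fun t ht => hM ⟨t, ht, rfl⟩⟩

end CoarseAux3

/-- For an odd pair `(G, H)` the exact sequence `0 → H → G → G/H → 0` coarsely splits. -/
theorem stmt12 {G : Type*} [AddCommGroup G] [Countable G]
    (H : AddSubgroup G) (hodd : ∀ x : G ⧸ H, Odd (addOrderOf x)) :
    ∃ (dH : H → H → ℝ) (dG : G → G → ℝ) (dQ : (G ⧸ H) → (G ⧸ H) → ℝ),
      IsProperInvAddMetric dH ∧ IsProperInvAddMetric dG ∧ IsProperInvAddMetric dQ ∧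
      ∃ f : G → H × (G ⧸ H),
        IsCoarseEquiv dG (fun p q => dH p.1 q.1 + dQ p.2 q.2) f ∧
        (∀ h : H, f (h : G) = (h, 0)) ∧
        ∀ x : G, (f x).2 = QuotientAddGroup.mk' H x := by
  classical
  haveI : Countable (G ⧸ H) := Quotient.countable
  obtain ⟨dH, hdH⟩ := CoarseAux.exists_properMetric H
  obtain ⟨dG, hdG⟩ := CoarseAux.exists_properMetric G
  obtain ⟨dQ, hdQ⟩ := CoarseAux.exists_properMetric (G ⧸ H)
  have htor : ∀ x : G ⧸ H, IsOfFinAddOrder x := by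
    intro x
    have h := hodd x
    rcases h with ⟨k, hk⟩
    have : 0 < addOrderOf x := by omega
    exact addOrderOf_pos_iff.mp this
  obtain ⟨s, hsect, hs0, hsfin⟩ := CoarseAux2.exists_section H htor
  set π : G → G ⧸ H := fun x => QuotientAddGroup.mk' H x with hπ
  have hπadd : ∀ x y : G, π (x + y) = π x + π y := fun x y => map_add _ x y
  have hπsub : ∀ x y : G, π (x - y) = π x - π y := fun x y => map_sub _ x y
  have hπH : ∀ h : H, π (h : G) = 0 := fun h =>
    (QuotientAddGroup.eq_zero_iff _).mpr h.2
  have hsectπ : ∀ q, π (s q) = q := hsect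
  have hmem : ∀ x : G, x - s (π x) ∈ H := by
    intro x
    rw [← QuotientAddGroup.eq_zero_iff (x - s (π x))]
    show π (x - s (π x)) = 0
    rw [hπsub, hsectπ (π x), sub_self]
  set f : G → H × (G ⧸ H) := fun x => (⟨x - s (π x), hmem x⟩, π x) with hf
  set g : H × (G ⧸ H) → G := fun p => (p.1 : G) + s p.2 with hg
  have hgf : ∀ x : G, g (f x) = x := by
    intro x
    show (x - s (π x)) + s (π x) = x
    abel
  have hπg : ∀ p : H × (G ⧸ H), π (g p) = p.2 := by
    intro p
    show π ((p.1 : G) + s p.2) = p.2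
    rw [hπadd, hπH, hsectπ, zero_add]
  have hfg : ∀ p : H × (G ⧸ H), f (g p) = p := by
    intro p
    show (⟨g p - s (π (g p)), _⟩, π (g p)) = p
    refine Prod.ext (Subtype.ext ?_) (hπg p)
    show g p - s (π (g p)) = (p.1 : G)
    rw [hπg p]
    show (p.1 : G) + s p.2 - s p.2 = (p.1 : G)
    abel
  refine ⟨dH, dG, dQ, hdH, hdG, hdQ, f, ⟨?_, g, ?_, ⟨0, ?_⟩, ⟨0, ?_⟩⟩, ?_, ?_⟩
  · -- f is coarse
    intro δ hδ
    have hC : {c : G | dG 0 c ≤ δ}.Finite := hdG.2.2.2.2.2 0 δ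
    set C := {c : G | dG 0 c ≤ δ} with hCdef
    set P : Set G := ⋃ c ∈ C, (fun w => c - w) '' (Set.range (fun q => s (q + π c) - s q))
      with hPdef
    have hP : P.Finite := hC.biUnion fun c _ => (hsfin (π c)).image _
    have hPH : (Subtype.val ⁻¹' P : Set H).Finite :=
      hP.preimage (Subtype.val_injective.injOn)
    obtain ⟨M1, hM1⟩ := CoarseAux3.bound_of_finite hdH hPH
    obtain ⟨M2, hM2⟩ := CoarseAux3.bound_of_finite hdQ (hC.image π)
    refine ⟨M1 + M2, ?_⟩
    intro x y hxy
    have hc : y - x ∈ C := by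
      show dG 0 (y - x) ≤ δ
      rw [← CoarseAux3.eq_zero_sub hdG x y]
      exact hxy
    have hπy : π y = π x + π (y - x) := by rw [← hπadd]; congr 1; abel
    have hfirst : (f y).1 - (f x).1 ∈ (Subtype.val ⁻¹' P : Set H) := by
      show ((f y).1 - (f x).1 : G) ∈ P
      refine Set.mem_biUnion hc ⟨s (π x + π (y - x)) - s (π x), ⟨π x, rfl⟩, ?_⟩
      show y - x - (s (π x + π (y - x)) - s (π x)) = ((f y).1 : G) - ((f x).1 : G)
      show y - x - (s (π x + π (y - x)) - s (π x)) = (y - s (π y)) - (x - s (π x))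
      rw [hπy]
      abel
    have h1 : dH (f x).1 (f y).1 ≤ M1 := by
      rw [CoarseAux3.eq_zero_sub hdH]
      exact hM1 _ hfirst
    have h2 : dQ (f x).2 (f y).2 ≤ M2 := by
      rw [CoarseAux3.eq_zero_sub hdQ]
      have : (f y).2 - (f x).2 = π (y - x) := by
        show π y - π x = π (y - x)
        rw [hπsub]
      rw [this]
      exact hM2 _ ⟨y - x, hc, rfl⟩
    exact add_le_add h1 h2
  · -- g is coarse
    intro δ hδ
    have hCH : {h : H | dH 0 h ≤ δ}.Finite := hdH.2.2.2.2.2 0 δ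
    have hCQ : {q : G ⧸ H | dQ 0 q ≤ δ}.Finite := hdQ.2.2.2.2.2 0 δ
    set T : Set G := ⋃ r ∈ {q : G ⧸ H | dQ 0 q ≤ δ}, ⋃ h ∈ {h : H | dH 0 h ≤ δ},
      (fun w => (h : G) + w) '' (Set.range (fun q => s (q + r) - s q)) with hTdef
    have hT : T.Finite := hCQ.biUnion fun r _ => hCH.biUnion fun h _ => (hsfin r).image _
    obtain ⟨M, hM⟩ := CoarseAux3.bound_of_finite hdG hT
    refine ⟨M, ?_⟩
    rintro p p' hpp
    have hpp' : dH p.1 p'.1 + dQ p.2 p'.2 ≤ δ := hpp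
    have h0H := hdH.1 p.1 p'.1
    have h0Q := hdQ.1 p.2 p'.2
    have hH : dH p.1 p'.1 ≤ δ := by linarith
    have hQ : dQ p.2 p'.2 ≤ δ := by linarith
    have hh : p'.1 - p.1 ∈ {h : H | dH 0 h ≤ δ} := by
      show dH 0 (p'.1 - p.1) ≤ δ
      rw [← CoarseAux3.eq_zero_sub hdH]
      exact hH
    have hr : p'.2 - p.2 ∈ {q : G ⧸ H | dQ 0 q ≤ δ} := by
      show dQ 0 (p'.2 - p.2) ≤ δ
      rw [← CoarseAux3.eq_zero_sub hdQ]
      exact hQ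
    have hmemT : g p' - g p ∈ T := by
      refine Set.mem_biUnion hr (Set.mem_biUnion hh ?_)
      refine ⟨s (p.2 + (p'.2 - p.2)) - s p.2, ⟨p.2, rfl⟩, ?_⟩
      show ((p'.1 - p.1 : H) : G) + (s (p.2 + (p'.2 - p.2)) - s p.2) = g p' - g p
      have he : p.2 + (p'.2 - p.2) = p'.2 := by abel
      rw [he]
      push_cast
      show ((p'.1 : G) - (p.1 : G)) + (s p'.2 - s p.2)
        = ((p'.1 : G) + s p'.2) - ((p.1 : G) + s p.2)
      abel
    rw [CoarseAux3.eq_zero_sub hdG]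
    exact hM _ hmemT
  · intro x
    rw [hgf x]
    exact le_of_eq ((hdG.2.1 x x).mpr rfl)
  · intro p
    rw [hfg p]
    have e1 : dH p.1 p.1 = 0 := (hdH.2.1 _ _).mpr rfl
    have e2 : dQ p.2 p.2 = 0 := (hdQ.2.1 _ _).mpr rfl
    show dH p.1 p.1 + dQ p.2 p.2 ≤ 0
    rw [e1, e2, add_zero]
  · intro h
    show (⟨(h : G) - s (π (h : G)), _⟩, π (h : G)) = ((h : H), (0 : G ⧸ H))
    refine Prod.ext (Subtype.ext ?_) (hπH h)
    show (h : G) - s (π (h : G)) = (h : G)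
    rw [hπH h, hs0, sub_zero]
  · intro x
    rfl
end

section
/- Every countable locally finite abelian group G admits a proper left invariant ultrametric d_u such that (G, d_u) is isometric to (⊕_{i=1}^{∞} ℤ_{pᵢ}, d_L) for some sequence of primes (pᵢ) and some proper invariant ultrametric d_L on the direct sum. -/
open Classical in
lemma chainMetricMul' {G : Type*} [Group G] (A : ℕ → Subgroup G)
    (hmono : Monotone A) (hbot : A 0 = ⊥)
    (hfin : ∀ n, ((A n : Set G)).Finite) (hex : ∀ x : G, ∃ n, x ∈ A n) :
    ∃ lv : G → ℕ,
      (∀ x n, x ∈ A n ↔ lv x ≤ n) ∧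
      IsProperLeftInvMetric (fun x y => (lv (x⁻¹ * y) : ℝ)) ∧
      (∀ x y z : G, (lv (x⁻¹*z) : ℝ) ≤ max (lv (x⁻¹*y) : ℝ) (lv (y⁻¹*z) : ℝ)) := by
  set lv : G → ℕ := fun x => Nat.find (hex x) with hlv
  have hchar : ∀ x n, x ∈ A n ↔ lv x ≤ n := by
    intro x n
    exact ⟨fun h => Nat.find_min' (hex x) h, fun h => hmono h (Nat.find_spec (hex x))⟩
  have hone : lv 1 = 0 := Nat.le_zero.mp ((hchar 1 0).mp (one_mem _))
  have hzero : ∀ x, lv x = 0 ↔ x = 1 := by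
    intro x
    constructor
    · intro h
      have : x ∈ A 0 := (hchar x 0).mpr h.le
      rw [hbot] at this; exact this
    · rintro rfl; exact hone
  have hinvle : ∀ x, lv x⁻¹ ≤ lv x := by
    intro x
    exact (hchar _ _).mp (inv_mem ((hchar x (lv x)).mpr le_rfl))
  have hinv : ∀ x, lv x⁻¹ = lv x := fun x =>
    le_antisymm (hinvle x) (by simpa using hinvle x⁻¹)
  have hmul : ∀ x y, lv (x * y) ≤ max (lv x) (lv y) := by
    intro x y
    refine (hchar _ _).mp (mul_mem ?_ ?_)
    · exact hmono (le_max_left _ _) ((hchar x (lv x)).mpr le_rfl)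
    · exact hmono (le_max_right _ _) ((hchar y (lv y)).mpr le_rfl)
  have hultra : ∀ x y z : G, (lv (x⁻¹*z) : ℝ) ≤ max (lv (x⁻¹*y) : ℝ) (lv (y⁻¹*z) : ℝ) := by
    intro x y z
    have : lv (x⁻¹*z) ≤ max (lv (x⁻¹*y)) (lv (y⁻¹*z)) := by
      have := hmul (x⁻¹*y) (y⁻¹*z)
      simpa [mul_assoc] using this
    calc (lv (x⁻¹*z) : ℝ) ≤ ((max (lv (x⁻¹*y)) (lv (y⁻¹*z)) : ℕ) : ℝ) := by exact_mod_cast this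
    _ = max (lv (x⁻¹*y) : ℝ) (lv (y⁻¹*z) : ℝ) := by push_cast; rfl
  refine ⟨lv, hchar, ⟨?_, ?_, ?_, ?_, ?_, ?_⟩, hultra⟩
  · intro x y; positivity
  · intro x y
    rw [Nat.cast_eq_zero, hzero, inv_mul_eq_one]
  · intro x y
    simp only []
    rw [show y⁻¹ * x = (x⁻¹*y)⁻¹ by group, hinv]
  · intro x y z
    refine (hultra x y z).trans ?_
    have h1 : (0:ℝ) ≤ (lv (x⁻¹*y) : ℝ) := by positivity
    have h2 : (0:ℝ) ≤ (lv (y⁻¹*z) : ℝ) := by positivity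
    rw [max_le_iff]; constructor <;> linarith
  · intro g h₁ h₂
    simp only []
    rw [show (g*h₁)⁻¹ * (g*h₂) = h₁⁻¹ * h₂ by group]
  · intro x K
    refine ((hfin ⌊K⌋₊).image (fun g => x * g)).subset ?_
    intro y hy
    simp only [Set.mem_setOf_eq] at hy
    have : lv (x⁻¹ * y) ≤ ⌊K⌋₊ := Nat.le_floor hy
    exact ⟨x⁻¹ * y, (hchar _ _).mpr this, by group⟩

open Classical in
lemma chainMetricAdd' {H : Type*} [AddGroup H] (A : ℕ → AddSubgroup H)
    (hmono : Monotone A) (hbot : A 0 = ⊥)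
    (hfin : ∀ n, ((A n : Set H)).Finite) (hex : ∀ x : H, ∃ n, x ∈ A n) :
    ∃ lv : H → ℕ,
      (∀ x n, x ∈ A n ↔ lv x ≤ n) ∧
      IsProperInvAddMetric (fun x y => (lv (-x + y) : ℝ)) ∧
      (∀ x y z : H, (lv (-x+z) : ℝ) ≤ max (lv (-x+y) : ℝ) (lv (-y+z) : ℝ)) := by
  set lv : H → ℕ := fun x => Nat.find (hex x) with hlv
  have hchar : ∀ x n, x ∈ A n ↔ lv x ≤ n := by
    intro x n
    exact ⟨fun h => Nat.find_min' (hex x) h, fun h => hmono h (Nat.find_spec (hex x))⟩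
  have hone : lv 0 = 0 := Nat.le_zero.mp ((hchar 0 0).mp (zero_mem _))
  have hzero : ∀ x, lv x = 0 ↔ x = 0 := by
    intro x
    constructor
    · intro h
      have : x ∈ A 0 := (hchar x 0).mpr h.le
      rw [hbot] at this; exact this
    · rintro rfl; exact hone
  have hinvle : ∀ x : H, lv (-x) ≤ lv x := by
    intro x
    exact (hchar _ _).mp (neg_mem ((hchar x (lv x)).mpr le_rfl))
  have hinv : ∀ x : H, lv (-x) = lv x := fun x =>
    le_antisymm (hinvle x) (by simpa using hinvle (-x))
  have hmul : ∀ x y : H, lv (x + y) ≤ max (lv x) (lv y) := by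
    intro x y
    refine (hchar _ _).mp (add_mem ?_ ?_)
    · exact hmono (le_max_left _ _) ((hchar x (lv x)).mpr le_rfl)
    · exact hmono (le_max_right _ _) ((hchar y (lv y)).mpr le_rfl)
  have hultra : ∀ x y z : H, (lv (-x+z) : ℝ) ≤ max (lv (-x+y) : ℝ) (lv (-y+z) : ℝ) := by
    intro x y z
    have : lv (-x+z) ≤ max (lv (-x+y)) (lv (-y+z)) := by
      have := hmul (-x+y) (-y+z)
      simpa [add_assoc] using this
    calc (lv (-x+z) : ℝ) ≤ ((max (lv (-x+y)) (lv (-y+z)) : ℕ) : ℝ) := by exact_mod_cast this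
    _ = max (lv (-x+y) : ℝ) (lv (-y+z) : ℝ) := by push_cast; rfl
  refine ⟨lv, hchar, ⟨?_, ?_, ?_, ?_, ?_, ?_⟩, hultra⟩
  · intro x y; positivity
  · intro x y
    rw [Nat.cast_eq_zero, hzero, neg_add_eq_zero]
  · intro x y
    simp only []
    rw [show -y + x = -(-x + y) by simp [neg_add_rev], hinv]
  · intro x y z
    refine (hultra x y z).trans ?_
    have h1 : (0:ℝ) ≤ (lv (-x+y) : ℝ) := by positivity
    have h2 : (0:ℝ) ≤ (lv (-y+z) : ℝ) := by positivity
    rw [max_le_iff]; constructor <;> linarith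
  · intro g h₁ h₂
    simp only []
    rw [show -(g+h₁) + (g+h₂) = -h₁ + h₂ by simp [neg_add_rev, add_assoc]]
  · intro x K
    refine ((hfin ⌊K⌋₊).image (fun g => x + g)).subset ?_
    intro y hy
    simp only [Set.mem_setOf_eq] at hy
    have : lv (-x + y) ≤ ⌊K⌋₊ := Nat.le_floor hy
    exact ⟨-x + y, (hchar _ _).mpr this, by simp⟩



def GoodFun {G : Type*} [Group G] {H : Type*} [AddGroup H]
    (A : ℕ → Subgroup G) (K : ℕ → AddSubgroup H) (n : ℕ) (f : G → H) : Prop :=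
  Set.BijOn f ↑(A n) ↑(K n) ∧
  ∀ x ∈ A n, ∀ y ∈ A n, ∀ m, (x⁻¹ * y ∈ A m ↔ f x - f y ∈ K m)

lemma ext_step {G : Type*} [Group G] {H : Type*} [AddCommGroup H]
    (A : ℕ → Subgroup G) (K : ℕ → AddSubgroup H)
    (hA : Monotone A) (hK : Monotone K)
    (hfinA : ∀ j, ((A j : Set G)).Finite) (hfinK : ∀ j, ((K j : Set H)).Finite)
    (hcard : ∀ j, Nat.card (A j) = Nat.card (K j))
    (n : ℕ) (f : G → H) (hf : GoodFun A K n f) :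
    ∃ f', GoodFun A K (n+1) f' ∧ ∀ x ∈ A n, f' x = f x := by
  classical
  obtain ⟨hbij, hcos⟩ := hf
  set S : Set G := ↑(A (n+1)) \ ↑(A n) with hS
  set T : Set H := ↑(K (n+1)) \ ↑(K n) with hT
  set πG : G → G ⧸ (A n) := QuotientGroup.mk with hπG
  set πH : H → H ⧸ (K n) := QuotientAddGroup.mk with hπH
  set SG : Set (G ⧸ (A n)) := πG '' S with hSG
  set SH : Set (H ⧸ (K n)) := πH '' T with hSH
  -- membership facts about `out`
  have houtG : ∀ c ∈ SG, Quotient.out c ∈ S := by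
    rintro c ⟨x, hx, rfl⟩
    have h1 : πG (Quotient.out (πG x)) = πG x := QuotientGroup.out_eq' _
    have h2 : (Quotient.out (πG x))⁻¹ * x ∈ A n := by
      rw [← QuotientGroup.eq]; exact h1
    constructor
    · have : x ∈ (A (n+1) : Set G) := hx.1
      have : Quotient.out (πG x) = x * (x⁻¹ * Quotient.out (πG x)) := by group
      rw [this]
      exact mul_mem hx.1 (hA n.le_succ (inv_mem_iff.mp (by simpa using h2)))
    · intro hmem
      exact hx.2 (by simpa using mul_mem hmem h2 : x ∈ (A n : Set G))
  have houtH : ∀ d ∈ SH, Quotient.out d ∈ T := by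
    rintro d ⟨u, hu, rfl⟩
    have h1 : πH (Quotient.out (πH u)) = πH u := QuotientAddGroup.out_eq' _
    have h2 : -(Quotient.out (πH u)) + u ∈ K n := by
      rw [← QuotientAddGroup.eq]; exact h1
    constructor
    · have : Quotient.out (πH u) = u + -(-(Quotient.out (πH u)) + u) := by abel
      rw [this]
      exact add_mem hu.1 (hK n.le_succ (neg_mem h2))
    · intro hmem
      exact hu.2 (by simpa using add_mem hmem h2 : u ∈ (K n : Set H))
  have hmemout : ∀ x : G, (Quotient.out (πG x))⁻¹ * x ∈ A n := by
    intro x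
    rw [← QuotientGroup.eq]
    exact QuotientGroup.out_eq' _
  have hmemoutH : ∀ u : H, -(Quotient.out (πH u)) + u ∈ K n := by
    intro u
    rw [← QuotientAddGroup.eq]
    exact QuotientAddGroup.out_eq' _
  -- finiteness
  have hfinS : S.Finite := (hfinA (n+1)).subset Set.diff_subset
  have hfinT : T.Finite := (hfinK (n+1)).subset Set.diff_subset
  have hfinSG : SG.Finite := hfinS.image _
  have hfinSH : SH.Finite := hfinT.image _
  -- counting
  have e1 : ↥S ≃ ↥SG × ↥(A n) := by
    refine ⟨fun x => (⟨πG x.1, ⟨x.1, x.2, rfl⟩⟩, ⟨(Quotient.out (πG x.1))⁻¹ * x.1, hmemout x.1⟩),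
      fun cg => ⟨(Quotient.out cg.1.1) * cg.2.1, ?_⟩, ?_, ?_⟩
    · obtain ⟨⟨c, hc⟩, ⟨g, hg⟩⟩ := cg
      have hout := houtG c hc
      constructor
      · exact mul_mem hout.1 (hA n.le_succ hg)
      · intro hmem
        exact hout.2 (by simpa using mul_mem hmem (inv_mem hg) : Quotient.out c ∈ (A n : Set G))
    · rintro ⟨x, hx⟩
      simp only []
      ext
      exact mul_inv_cancel_left _ _
    · rintro ⟨⟨c, hc⟩, ⟨g, hg⟩⟩
      have hq : πG (Quotient.out c * g) = c := by
        have h1 : πG (Quotient.out c) = c := QuotientGroup.out_eq' _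
        have h2 : πG (Quotient.out c * g) = πG (Quotient.out c) :=
          QuotientGroup.eq.mpr (by simpa using inv_mem hg)
        exact h2.trans h1
      have hq2 : (Quotient.out (πG (Quotient.out c * g)))⁻¹ * (Quotient.out c * g) = g := by
        rw [hq]; exact inv_mul_cancel_left _ _
      simp only []
      refine Prod.ext ?_ ?_
      · exact Subtype.ext hq
      · exact Subtype.ext hq2
  have e2 : ↥T ≃ ↥SH × ↥(K n) := by
    refine ⟨fun u => (⟨πH u.1, ⟨u.1, u.2, rfl⟩⟩, ⟨-(Quotient.out (πH u.1)) + u.1, hmemoutH u.1⟩),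
      fun cg => ⟨(Quotient.out cg.1.1) + cg.2.1, ?_⟩, ?_, ?_⟩
    · obtain ⟨⟨c, hc⟩, ⟨g, hg⟩⟩ := cg
      have hout := houtH c hc
      constructor
      · exact add_mem hout.1 (hK n.le_succ hg)
      · intro hmem
        exact hout.2 (by simpa using add_mem hmem (neg_mem hg) : Quotient.out c ∈ (K n : Set H))
    · rintro ⟨u, hu⟩
      simp only []
      ext
      exact add_neg_cancel_left _ _
    · rintro ⟨⟨c, hc⟩, ⟨g, hg⟩⟩
      have hq : πH (Quotient.out c + g) = c := by
        have h1 : πH (Quotient.out c) = c := QuotientAddGroup.out_eq' _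
        have h2 : πH (Quotient.out c + g) = πH (Quotient.out c) :=
          QuotientAddGroup.eq.mpr (by simpa [add_assoc] using neg_mem hg)
        exact h2.trans h1
      have hq2 : -(Quotient.out (πH (Quotient.out c + g))) + (Quotient.out c + g) = g := by
        rw [hq]; exact neg_add_cancel_left _ _
      simp only []
      refine Prod.ext ?_ ?_
      · exact Subtype.ext hq
      · exact Subtype.ext hq2
  haveI : Finite ↥S := hfinS.to_subtype
  haveI : Finite ↥T := hfinT.to_subtype
  haveI : Finite ↥SG := hfinSG.to_subtype
  haveI : Finite ↥SH := hfinSH.to_subtype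
  haveI : Finite ↥(A n) := (hfinA n).to_subtype
  haveI : Finite ↥(K n) := (hfinK n).to_subtype
  haveI : Finite ↥(A (n+1)) := (hfinA (n+1)).to_subtype
  haveI : Finite ↥(K (n+1)) := (hfinK (n+1)).to_subtype
  have hScard : Nat.card ↥S = Nat.card ↥T := by
    have h1 : Nat.card ↥S = S.ncard := Nat.card_coe_set_eq S
    have h2 : Nat.card ↥T = T.ncard := Nat.card_coe_set_eq T
    have h3 : S.ncard = (↑(A (n+1)) : Set G).ncard - (↑(A n) : Set G).ncard :=
      Set.ncard_diff (hA n.le_succ) ((hfinA n))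
    have h4 : T.ncard = (↑(K (n+1)) : Set H).ncard - (↑(K n) : Set H).ncard :=
      Set.ncard_diff (hK n.le_succ) ((hfinK n))
    have h5 : (↑(A (n+1)) : Set G).ncard = Nat.card ↥(K (n+1)) := by
      rw [← Nat.card_coe_set_eq]; exact hcard (n+1)
    have h6 : (↑(A n) : Set G).ncard = Nat.card ↥(K n) := by
      rw [← Nat.card_coe_set_eq]; exact hcard n
    have h7 : (↑(K (n+1)) : Set H).ncard = Nat.card ↥(K (n+1)) := by
      rw [← Nat.card_coe_set_eq]; rfl
    have h8 : (↑(K n) : Set H).ncard = Nat.card ↥(K n) := by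
      rw [← Nat.card_coe_set_eq]; rfl
    omega
  have hAKn : Nat.card ↥(A n) = Nat.card ↥(K n) := hcard n
  have hKpos : 0 < Nat.card ↥(K n) := Nat.card_pos
  have hcardSGSH : Nat.card ↥SG = Nat.card ↥SH := by
    have h1 : Nat.card ↥S = Nat.card ↥SG * Nat.card ↥(A n) := by
      rw [Nat.card_congr e1, Nat.card_prod]
    have h2 : Nat.card ↥T = Nat.card ↥SH * Nat.card ↥(K n) := by
      rw [Nat.card_congr e2, Nat.card_prod]
    rw [hAKn] at h1
    have := h1.symm.trans (hScard.trans h2)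
    exact Nat.eq_of_mul_eq_mul_right hKpos this
  obtain ⟨σ'⟩ : Nonempty (↥SG ≃ ↥SH) := Finite.card_eq.mp hcardSGSH
  set σ : (G ⧸ (A n)) → (H ⧸ (K n)) :=
    fun c => if h : c ∈ SG then (σ' ⟨c, h⟩ : ↥SH).1 else πH 0 with hσ
  have hσmem : ∀ c ∈ SG, σ c ∈ SH := by
    intro c hc; simp only [hσ, dif_pos hc]; exact (σ' ⟨c, hc⟩).2
  have hσinj : ∀ c ∈ SG, ∀ c' ∈ SG, σ c = σ c' → c = c' := by
    intro c hc c' hc' h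
    simp only [hσ, dif_pos hc, dif_pos hc'] at h
    have := σ'.injective (Subtype.ext h)
    exact congrArg Subtype.val this
  have hσsurj : ∀ d ∈ SH, ∃ c ∈ SG, σ c = d := by
    intro d hd
    refine ⟨(σ'.symm ⟨d, hd⟩).1, (σ'.symm ⟨d, hd⟩).2, ?_⟩
    simp only [hσ, dif_pos (σ'.symm ⟨d, hd⟩).2]
    rw [show (⟨(σ'.symm ⟨d, hd⟩).1, (σ'.symm ⟨d, hd⟩).2⟩ : ↥SG) = σ'.symm ⟨d, hd⟩ from rfl,
      Equiv.apply_symm_apply]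
  set φ : G → H :=
    fun x => Quotient.out (σ (πG x)) + f ((Quotient.out (πG x))⁻¹ * x) with hφ
  -- key facts about φ on S
  have hφT : ∀ x ∈ S, φ x ∈ T := by
    intro x hx
    have h1 : Quotient.out (σ (πG x)) ∈ T := houtH _ (hσmem _ ⟨x, hx, rfl⟩)
    have h2 : f ((Quotient.out (πG x))⁻¹ * x) ∈ K n := hbij.mapsTo (hmemout x)
    constructor
    · exact add_mem h1.1 (hK n.le_succ h2)
    · intro hmem
      exact h1.2 (by simpa [hφ] using add_mem hmem (neg_mem h2) : Quotient.out (σ (πG x)) ∈ (K n : Set H))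
  have hφπ : ∀ x ∈ S, πH (φ x) = σ (πG x) := by
    intro x hx
    have h2 : f ((Quotient.out (πG x))⁻¹ * x) ∈ K n := hbij.mapsTo (hmemout x)
    have : πH (φ x) = πH (Quotient.out (σ (πG x))) := by
      symm
      exact QuotientAddGroup.eq.mpr (by simpa [hφ, add_assoc] using h2)
    rw [this]
    exact QuotientAddGroup.out_eq' _
  set f' : G → H := fun x => if x ∈ (A n : Set G) then f x else if x ∈ S then φ x else 0 with hf'
  have hf'A : ∀ x ∈ (A n : Set G), f' x = f x := by
    intro x hx; simp only [hf', if_pos hx]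
  have hf'S : ∀ x ∈ S, f' x = φ x := by
    intro x hx
    simp only [hf', if_neg hx.2, if_pos hx]
  have hsplit : ∀ x ∈ (A (n+1) : Set G), x ∈ (A n : Set G) ∨ x ∈ S := by
    intro x hx
    by_cases h : x ∈ (A n : Set G)
    · exact Or.inl h
    · exact Or.inr ⟨hx, h⟩
  -- maps into
  have hmapsto : ∀ x ∈ (A (n+1) : Set G), f' x ∈ (K (n+1) : Set H) := by
    intro x hx
    rcases hsplit x hx with h | h
    · rw [hf'A x h]; exact hK n.le_succ (hbij.mapsTo h)
    · rw [hf'S x h]; exact (hφT x h).1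
  -- injectivity
  have hinj : Set.InjOn f' ↑(A (n+1)) := by
    intro x hx y hy heq
    rcases hsplit x hx with h1 | h1 <;> rcases hsplit y hy with h2 | h2
    · rw [hf'A x h1, hf'A y h2] at heq
      exact hbij.injOn h1 h2 heq
    · rw [hf'A x h1, hf'S y h2] at heq
      exact absurd (heq ▸ hbij.mapsTo h1) (hφT y h2).2
    · rw [hf'S x h1, hf'A y h2] at heq
      exact absurd (heq.symm ▸ hbij.mapsTo h2) (hφT x h1).2
    · rw [hf'S x h1, hf'S y h2] at heq
      have hπeq : πG x = πG y := by
        refine hσinj _ ⟨x, h1, rfl⟩ _ ⟨y, h2, rfl⟩ ?_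
        rw [← hφπ x h1, ← hφπ y h2, heq]
      rw [hφ] at heq
      simp only [hπeq] at heq
      have hg : (Quotient.out (πG y))⁻¹ * x = (Quotient.out (πG y))⁻¹ * y :=
        hbij.injOn (hπeq ▸ hmemout x) (hmemout y) (add_left_cancel heq)
      exact mul_left_cancel hg
  -- surjectivity
  have hsurj : Set.SurjOn f' ↑(A (n+1)) ↑(K (n+1)) := by
    intro u hu
    by_cases hun : u ∈ (K n : Set H)
    · obtain ⟨x, hx, hfx⟩ := hbij.surjOn hun
      exact ⟨x, hA n.le_succ hx, by rw [hf'A x hx]; exact hfx⟩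
    · have huT : u ∈ T := ⟨hu, hun⟩
      obtain ⟨c, hc, hcd⟩ := hσsurj (πH u) ⟨u, huT, rfl⟩
      have hw : -(Quotient.out (σ c)) + u ∈ K n := by
        rw [← QuotientAddGroup.eq]
        show πH (Quotient.out (σ c)) = πH u
        rw [hcd]
        exact QuotientAddGroup.out_eq' _
      obtain ⟨g, hg, hfg⟩ := hbij.surjOn hw
      have houtc : Quotient.out c ∈ S := houtG c hc
      set x := Quotient.out c * g with hxdef
      have hxS : x ∈ S := by
        constructor
        · exact mul_mem houtc.1 (hA n.le_succ hg)
        · intro hmem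
          exact houtc.2
            (by simpa [hxdef] using mul_mem hmem (inv_mem hg) : Quotient.out c ∈ (A n : Set G))
      have hπx : πG x = c := by
        have h1 : πG (Quotient.out c) = c := QuotientGroup.out_eq' _
        have h2 : πG x = πG (Quotient.out c) :=
          QuotientGroup.eq.mpr (by simpa [hxdef] using inv_mem hg)
        exact h2.trans h1
      refine ⟨x, hxS.1, ?_⟩
      rw [hf'S x hxS, hφ]
      simp only [hπx]
      have : (Quotient.out c)⁻¹ * x = g := by rw [hxdef]; exact inv_mul_cancel_left _ _
      rw [this, hfg]
      exact add_neg_cancel_left _ _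
  -- the coset condition
  have hcond : ∀ x ∈ A (n+1), ∀ y ∈ A (n+1), ∀ m, (x⁻¹ * y ∈ A m ↔ f' x - f' y ∈ K m) := by
    intro x hx y hy m
    rcases le_or_gt m n with hm | hm
    · rcases hsplit x hx with h1 | h1 <;> rcases hsplit y hy with h2 | h2
      · rw [hf'A x h1, hf'A y h2]
        exact hcos x h1 y h2 m
      · rw [hf'A x h1, hf'S y h2]
        constructor
        · intro h
          exact absurd (by simpa using mul_mem h1 (hA hm h) : y ∈ (A n : Set G)) h2.2
        · intro h
          have : f x - (f x - φ y) ∈ K n := sub_mem (hbij.mapsTo h1) (hK hm h)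
          simp only [sub_sub_cancel] at this
          exact absurd this (hφT y h2).2
      · rw [hf'S x h1, hf'A y h2]
        constructor
        · intro h
          have : x ∈ (A n : Set G) := by
            simpa using mul_mem h2 (inv_mem (hA hm h))
          exact absurd this h1.2
        · intro h
          have : f y + (φ x - f y) ∈ K n := add_mem (hbij.mapsTo h2) (hK hm h)
          simp only [add_sub_cancel] at this
          exact absurd this (hφT x h1).2
      · rw [hf'S x h1, hf'S y h2]
        by_cases hπ : πG x = πG y
        · have hkey : x⁻¹ * y = ((Quotient.out (πG y))⁻¹ * x)⁻¹ * ((Quotient.out (πG y))⁻¹ * y) := by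
            group
          have := hcos _ (hπ ▸ hmemout x) _ (hmemout y) m
          rw [hkey]
          rw [hφ]
          simp only [hπ]
          rw [show Quotient.out (σ (πG y)) + f ((Quotient.out (πG y))⁻¹ * x) -
              (Quotient.out (σ (πG y)) + f ((Quotient.out (πG y))⁻¹ * y)) =
              f ((Quotient.out (πG y))⁻¹ * x) - f ((Quotient.out (πG y))⁻¹ * y) by abel]
          exact this
        · constructor
          · intro h
            exact absurd (QuotientGroup.eq.mpr (hA hm h)) hπ
          · intro h
            have h' : -(φ x) + φ y ∈ K n := by
              have := neg_mem (hK hm h)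
              rwa [neg_sub, sub_eq_neg_add] at this
            have : πH (φ x) = πH (φ y) := QuotientAddGroup.eq.mpr h'
            rw [hφπ x h1, hφπ y h2] at this
            exact absurd (hσinj _ ⟨x, h1, rfl⟩ _ ⟨y, h2, rfl⟩ this) hπ
    · have hle : n + 1 ≤ m := hm
      constructor
      · intro _
        exact sub_mem (hK hle (hmapsto x hx)) (hK hle (hmapsto y hy))
      · intro _
        exact hA hle (mul_mem (inv_mem hx) hy)
  exact ⟨f', ⟨⟨hmapsto, hinj, hsurj⟩, hcond⟩, fun x hx => hf'A x hx⟩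

lemma exists_good_limit {G : Type*} [Group G] {H : Type*} [AddCommGroup H]
    (A : ℕ → Subgroup G) (K : ℕ → AddSubgroup H)
    (hA : Monotone A) (hK : Monotone K)
    (hbotA : A 0 = ⊥) (hbotK : K 0 = ⊥)
    (hfinA : ∀ j, ((A j : Set G)).Finite) (hfinK : ∀ j, ((K j : Set H)).Finite)
    (hcard : ∀ j, Nat.card (A j) = Nat.card (K j))
    (hexA : ∀ x : G, ∃ n, x ∈ A n) (hexK : ∀ u : H, ∃ n, u ∈ K n) :
    ∃ f : G → H, Function.Bijective f ∧ ∀ x y : G, ∀ m, (x⁻¹ * y ∈ A m ↔ f x - f y ∈ K m) := by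
  classical
  have hbase : GoodFun A K 0 (fun _ => 0) := by
    constructor
    · rw [hbotA, hbotK]
      refine ⟨fun x hx => ?_, fun x hx y hy _ => ?_, fun u hu => ?_⟩
      · simp
      · have hx1 : x = 1 := by simpa using hx
        have hy1 : y = 1 := by simpa using hy
        rw [hx1, hy1]
      · have : u = 0 := by simpa using hu
        exact ⟨1, by simp, by simp [this]⟩
    · intro x hx y hy m
      rw [hbotA] at hx hy
      have hx1 : x = 1 := by simpa using hx
      have hy1 : y = 1 := by simpa using hy
      subst hx1; subst hy1
      simp only [inv_mul_cancel, sub_self]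
      exact ⟨fun _ => zero_mem _, fun _ => one_mem _⟩
  have hstep := ext_step A K hA hK hfinA hfinK hcard
  -- build the tower of functions
  let F : ∀ _ : ℕ, {f : G → H // GoodFun A K _ f} := fun n =>
    Nat.rec (motive := fun n => {f : G → H // GoodFun A K n f})
      ⟨fun _ => 0, hbase⟩
      (fun n fp => ⟨(hstep n fp.1 fp.2).choose, (hstep n fp.1 fp.2).choose_spec.1⟩) n
  have hFsucc : ∀ n, ∀ x ∈ A n, (F (n+1)).1 x = (F n).1 x := by
    intro n x hx
    exact (hstep n (F n).1 (F n).2).choose_spec.2 x hx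
  have hagree : ∀ n m, n ≤ m → ∀ x ∈ A n, (F m).1 x = (F n).1 x := by
    intro n m hnm
    induction m, hnm using Nat.le_induction with
    | base => intro x _; rfl
    | succ m hnm ih =>
      intro x hx
      rw [hFsucc m x (hA (le_trans hnm (le_refl m)) hx)]
      exact ih x hx
  set f : G → H := fun x => (F (Nat.find (hexA x))).1 x with hfdef
  have hfeq : ∀ n, ∀ x ∈ A n, f x = (F n).1 x := by
    intro n x hx
    have h1 : Nat.find (hexA x) ≤ n := Nat.find_min' (hexA x) hx
    have h2 : x ∈ A (Nat.find (hexA x)) := Nat.find_spec (hexA x)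
    rw [hfdef]
    simp only []
    rw [hagree _ n h1 x h2]
  have hchar : ∀ x y : G, ∀ m, (x⁻¹ * y ∈ A m ↔ f x - f y ∈ K m) := by
    intro x y m
    obtain ⟨nx, hnx⟩ := hexA x
    obtain ⟨ny, hny⟩ := hexA y
    set n := max nx ny
    have hx : x ∈ A n := hA (le_max_left _ _) hnx
    have hy : y ∈ A n := hA (le_max_right _ _) hny
    rw [hfeq n x hx, hfeq n y hy]
    exact (F n).2.2 x hx y hy m
  refine ⟨f, ⟨?_, ?_⟩, hchar⟩
  · intro x y heq
    obtain ⟨nx, hnx⟩ := hexA x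
    obtain ⟨ny, hny⟩ := hexA y
    set n := max nx ny
    have hx : x ∈ A n := hA (le_max_left _ _) hnx
    have hy : y ∈ A n := hA (le_max_right _ _) hny
    rw [hfeq n x hx, hfeq n y hy] at heq
    exact (F n).2.1.injOn hx hy heq
  · intro u
    obtain ⟨n, hn⟩ := hexK u
    obtain ⟨x, hx, hfx⟩ := (F n).2.1.surjOn hn
    exact ⟨x, by rw [hfeq n x hx]; exact hfx⟩


/-- Every countably infinite locally finite abelian group admits a proper left invariant
ultrametric isometric to `(⊕ᵢ ℤ_{pᵢ}, d_L)` for some sequence of primes `pᵢ` and some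
proper invariant ultrametric `d_L`. -/
theorem stmt14 {G : Type*} [CommGroup G] [Countable G] [Infinite G]
    (hlf : ∀ S : Finset G, ((Subgroup.closure (S : Set G)) : Set G).Finite) :
    ∃ p : ℕ → ℕ, (∀ i, (p i).Prime) ∧
      ∃ (du : G → G → ℝ) (dL : (Π₀ i, ZMod (p i)) → (Π₀ i, ZMod (p i)) → ℝ),
        IsProperLeftInvMetric du ∧ (∀ x y z : G, du x z ≤ max (du x y) (du y z)) ∧
        IsProperInvAddMetric dL ∧
        (∀ x y z : (Π₀ i, ZMod (p i)), dL x z ≤ max (dL x y) (dL y z)) ∧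
        ∃ f : G → Π₀ i, ZMod (p i),
          Function.Bijective f ∧ ∀ x y, dL (f x) (f y) = du x y := by
  classical
  obtain ⟨e, he⟩ := exists_surjective_nat G
  set A : ℕ → Subgroup G := fun n => Subgroup.closure ↑((Finset.range n).image e) with hAdef
  have hAfin : ∀ n, ((A n : Set G)).Finite := fun n => hlf _
  have hAmono : Monotone A := by
    intro a b hab
    apply Subgroup.closure_mono
    exact_mod_cast Finset.coe_subset.mpr
      (Finset.image_subset_image (Finset.range_subset_range.mpr hab))
  have hAbot : A 0 = ⊥ := by
    simp [hAdef]
  have hAex : ∀ x : G, ∃ n, x ∈ A n := by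
    intro x
    obtain ⟨i, rfl⟩ := he x
    refine ⟨i + 1, Subgroup.subset_closure ?_⟩
    simp only [Finset.coe_image, Set.mem_image, Finset.mem_coe, Finset.mem_range]
    exact ⟨i, Nat.lt_succ_self i, rfl⟩
  haveI : ∀ n, Finite (A n) := fun n => (hAfin n).to_subtype
  set m : ℕ → ℕ := fun n => Nat.card (A n) with hmdef
  have hm0 : m 0 = 1 := by rw [hmdef]; simp only [hAbot]; exact Subgroup.card_bot
  have hmpos : ∀ n, 0 < m n := fun n => Nat.card_pos
  have hmdvd : ∀ n, m n ∣ m (n+1) := fun n => Subgroup.card_dvd_of_le (hAmono (Nat.le_succ n))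
  have hmmono : Monotone m := by
    intro a b hab
    rw [hmdef]
    simp only [Nat.card_coe_set_eq]
    exact Set.ncard_le_ncard (SetLike.coe_subset_coe.mpr (hAmono hab)) (hAfin b)
  have hmub : ∀ N, ∃ n, N < m n := by
    intro N
    induction N with
    | zero => exact ⟨0, hm0 ▸ one_pos⟩
    | succ N ih =>
      obtain ⟨n, hn⟩ := ih
      have hex : ∃ x : G, x ∉ A n := by
        by_contra h
        push_neg at h
        exact Set.infinite_univ (α := G) ((hAfin n).subset (fun x _ => h x))
      obtain ⟨x, hx⟩ := hex
      obtain ⟨n', hxn'⟩ := hAex x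
      refine ⟨max n n', ?_⟩
      have hlt : m n < m (max n n') := by
        have hss : (A n : Set G) ⊂ (A (max n n') : Set G) := by
          refine ⟨SetLike.coe_subset_coe.mpr (hAmono (le_max_left _ _)), fun hsub => hx ?_⟩
          exact hsub (hAmono (le_max_right _ _) hxn')
        rw [hmdef]
        simp only [Nat.card_coe_set_eq]
        exact Set.ncard_lt_ncard hss (hAfin _)
      omega
  -- prime factor lists
  set q : ℕ → ℕ := fun n => m (n+1) / m n with hqdef
  have hq : ∀ n, m (n+1) = m n * q n := fun n => (Nat.mul_div_cancel' (hmdvd n)).symm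
  have hqpos : ∀ n, 0 < q n := fun n =>
    Nat.pos_of_mul_pos_left (a := m n) (by rw [← hq n]; exact hmpos (n+1))
  set L : ℕ → List ℕ := fun n => (q n).primeFactorsList with hLdef
  have hLprod : ∀ n, (L n).prod = q n := fun n => Nat.prod_primeFactorsList (hqpos n).ne'
  set C : ℕ → List ℕ := fun n => (List.range n).flatMap L with hCdef
  set k : ℕ → ℕ := fun n => (C n).length with hkdef
  have hCsucc : ∀ n, C (n+1) = C n ++ L n := by
    intro n
    rw [hCdef]
    simp only [List.range_succ, List.flatMap_append]
    simp
  have hCpre : ∀ a b : ℕ, a ≤ b → ∃ t, C b = C a ++ t := by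
    intro a b hab
    obtain ⟨d, rfl⟩ : ∃ d, b = a + d := ⟨b - a, (Nat.add_sub_cancel' hab).symm⟩
    refine ⟨((List.range d).map (a + ·)).flatMap L, ?_⟩
    rw [hCdef]
    simp only [List.range_add, List.flatMap_append]
  have hkmono : Monotone k := by
    intro a b hab
    obtain ⟨t, ht⟩ := hCpre a b hab
    rw [hkdef]
    simp only [ht, List.length_append]
    omega
  have hksucc : ∀ n, k (n+1) = k n + (L n).length := by
    intro n
    rw [hkdef]; simp only [hCsucc n, List.length_append]
  -- k is unbounded
  have hkub : ∀ N, ∃ n, N ≤ k n := by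
    intro N
    by_contra hcon
    push_neg at hcon
    have hbdd : BddAbove (Set.range k) := ⟨N, by rintro _ ⟨n, rfl⟩; exact (hcon n).le⟩
    have hne : (Set.range k).Nonempty := ⟨k 0, 0, rfl⟩
    obtain ⟨n0, hn0⟩ := Nat.sSup_mem hne hbdd
    have hkconst : ∀ n, n0 ≤ n → k n = k n0 := by
      intro n hn
      refine le_antisymm ?_ (hkmono hn)
      rw [hn0]
      exact le_csSup hbdd ⟨n, rfl⟩
    have hmconst : ∀ n, n0 ≤ n → m n = m n0 := by
      intro n hn
      induction n with
      | zero => rw [Nat.le_zero.mp hn]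
      | succ n ih =>
        rcases Nat.lt_or_ge n0 (n+1) with h | h
        · have hn0n : n0 ≤ n := Nat.lt_succ_iff.mp h
          have hLnil : (L n).length = 0 := by
            have h1 := hksucc n
            rw [hkconst n hn0n, hkconst (n+1) hn] at h1
            omega
          have : q n = 1 := by
            have := hLprod n
            rw [List.length_eq_zero_iff.mp hLnil] at this
            simpa using this.symm
          rw [hq n, this, mul_one]
          exact ih hn0n
        · rw [le_antisymm h hn]
    obtain ⟨n, hn⟩ := hmub (m n0)
    rcases le_or_gt n0 n with h | h
    · rw [hmconst n h] at hn; omega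
    · have := hmmono h.le
      omega
  -- the sequence of primes
  have hkub' : ∀ i : ℕ, ∃ n, i < k n := fun i => hkub (i+1)
  set p : ℕ → ℕ := fun i => (C (Nat.find (hkub' i))).getD i 2 with hpdef
  have hCagree : ∀ a b i : ℕ, a ≤ b → i < k a → (C b).getD i 2 = (C a).getD i 2 := by
    intro a b i hab hi
    obtain ⟨t, ht⟩ := hCpre a b hab
    rw [ht]
    exact List.getD_append _ _ _ _ hi
  have hpeq : ∀ i n : ℕ, i < k n → p i = (C n).getD i 2 := by
    intro i n hi
    rw [hpdef]
    simp only []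
    rcases le_total n (Nat.find (hkub' i)) with h | h
    · exact hCagree n _ i h hi
    · exact (hCagree _ n i h (Nat.find_spec (hkub' i))).symm
  have hpmem : ∀ i n : ℕ, i < k n → p i ∈ C n := by
    intro i n hi
    rw [hpeq i n hi, List.getD_eq_getElem _ _ hi]
    exact List.getElem_mem _
  have hpprime : ∀ i, (p i).Prime := by
    intro i
    have h1 := hpmem i _ (Nat.find_spec (hkub' i))
    rw [hCdef] at h1
    simp only [List.mem_flatMap, List.mem_range] at h1
    obtain ⟨j, _, hj⟩ := h1
    exact Nat.prime_of_mem_primeFactorsList hj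
  -- product of primes gives cards
  have hlistprod : ∀ (l : List ℕ) (d : ℕ),
      ∏ i ∈ Finset.range l.length, l.getD i d = l.prod := by
    intro l d
    induction l with
    | nil => simp
    | cons a t ih =>
      rw [List.length_cons, Finset.prod_range_succ']
      simp only [List.getD_cons_succ, List.getD_cons_zero, List.prod_cons]
      rw [ih, mul_comm]
  have hprodk : ∀ n, ∏ i ∈ Finset.range (k n), p i = m n := by
    intro n
    induction n with
    | zero =>
      have : k 0 = 0 := by rw [hkdef]; simp [hCdef]
      rw [this]
      simpa using hm0.symm
    | succ n ih =>
      rw [hksucc n, Finset.prod_range_add]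
      have hblock : ∀ i < (L n).length, p (k n + i) = (L n).getD i 2 := by
        intro i hi
        have h1 : k n + i < k (n+1) := by rw [hksucc n]; omega
        rw [hpeq _ (n+1) h1]
        rw [hCdef]
        simp only []
        rw [show (List.range (n+1)).flatMap L = C n ++ L n from hCsucc n]
        rw [List.getD_append_right _ _ _ _ (le_refl (C n).length |>.trans (Nat.le_add_right _ i))]
        congr 1
        omega
      have : ∏ i ∈ Finset.range (L n).length, p (k n + i) = (L n).prod := by
        rw [← hlistprod (L n) 2]
        exact Finset.prod_congr rfl fun i hi => hblock i (Finset.mem_range.mp hi)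
      rw [this, hLprod n, ih, ← hq n]
  -- the target group
  haveI hNZ : ∀ i, NeZero (p i) := fun i => ⟨(hpprime i).pos.ne'⟩
  set H : Type _ := Π₀ i : ℕ, ZMod (p i) with hHdef
  set K : ℕ → AddSubgroup H := fun n =>
    { carrier := {x : H | ∀ i, k n ≤ i → x i = 0}
      zero_mem' := fun i _ => rfl
      add_mem' := by
        intro a b ha hb i hi
        show a i + b i = 0
        rw [ha i hi, hb i hi, add_zero]
      neg_mem' := by
        intro a ha i hi
        show -(a i) = 0
        rw [ha i hi, neg_zero] } with hKdef
  have hKmem : ∀ (n : ℕ) (x : H), x ∈ K n ↔ ∀ i, k n ≤ i → x i = 0 := fun n x => Iff.rfl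
  have hKmono : Monotone K := by
    intro a b hab x hx i hi
    exact hx i (le_trans (hkmono hab) hi)
  have hKbot : K 0 = ⊥ := by
    have hk0 : k 0 = 0 := by rw [hkdef]; simp [hCdef]
    ext x
    simp only [AddSubgroup.mem_bot]
    constructor
    · intro hx
      ext i
      exact hx i (hk0 ▸ Nat.zero_le i)
    · rintro rfl
      exact zero_mem _
  have hKex : ∀ x : H, ∃ n, x ∈ K n := by
    intro x
    obtain ⟨n, hn⟩ := hkub ((x.support.sup id) + 1)
    refine ⟨n, fun i hi => ?_⟩
    by_contra hne
    have hmem : i ∈ x.support := DFinsupp.mem_support_iff.mpr hne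
    have : i ≤ x.support.sup id := Finset.le_sup (f := id) hmem
    omega
  -- card of K n
  have hKequiv : ∀ n, ∃ eq : ↥(K n) ≃ (∀ i : Fin (k n), ZMod (p i.1)), True := by
    intro n
    refine ⟨⟨fun x i => x.1 i.1, fun v =>
      ⟨DFinsupp.mk (Finset.range (k n)) (fun i => v ⟨i.1, Finset.mem_range.mp i.2⟩), ?_⟩, ?_, ?_⟩,
      trivial⟩
    · intro i hi
      rw [DFinsupp.mk_apply]
      rw [dif_neg (by simpa using Nat.not_lt.mpr hi)]
    · rintro ⟨x, hx⟩
      refine Subtype.ext (DFinsupp.ext fun i => ?_)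
      rw [DFinsupp.mk_apply]
      by_cases hi : i ∈ Finset.range (k n)
      · rw [dif_pos hi]
      · rw [dif_neg hi]
        exact (hx i (Nat.not_lt.mp (by simpa using hi))).symm
    · intro v
      funext i
      show (_ : ↥(K n)).1 i.1 = v i
      rw [DFinsupp.mk_apply, dif_pos (Finset.mem_range.mpr i.2)]
  have hKfinite : ∀ n, Finite ↥(K n) := by
    intro n
    obtain ⟨eqn, -⟩ := hKequiv n
    exact Finite.of_equiv _ eqn.symm
  have hKfin : ∀ n, ((K n : Set H)).Finite := by
    intro n
    haveI := hKfinite n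
    exact Set.finite_coe_iff.mp (by exact hKfinite n)
  have hKcard : ∀ n, Nat.card (A n) = Nat.card (K n) := by
    intro n
    obtain ⟨eqn, -⟩ := hKequiv n
    rw [Nat.card_congr eqn, Nat.card_pi]
    have : ∀ i : Fin (k n), Nat.card (ZMod (p i.1)) = p i.1 := fun i => Nat.card_zmod _
    rw [Finset.prod_congr rfl (fun i _ => this i)]
    rw [Fin.prod_univ_eq_prod_range (fun i => p i) (k n)]
    rw [hprodk n]
  
  -- assemble the final statement
  obtain ⟨f, hfbij, hfchar⟩ := exists_good_limit A K hAmono hKmono hAbot hKbot hAfin hKfin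
    hKcard hAex hKex
  obtain ⟨lvG, hlvGchar, hduM, hduU⟩ := chainMetricMul' A hAmono hAbot hAfin hAex
  obtain ⟨lvH, hlvHchar, hdLM, hdLU⟩ := chainMetricAdd' K hKmono hKbot hKfin hKex
  refine ⟨p, hpprime, fun x y => (lvG (x⁻¹ * y) : ℝ), fun x y => (lvH (-x + y) : ℝ),
    hduM, hduU, hdLM, hdLU, f, hfbij, ?_⟩
  intro x y
  have hnat : lvH (-(f x) + f y) = lvG (x⁻¹ * y) := by
    apply le_antisymm
    · apply (hlvHchar _ _).mp
      have hmem : x⁻¹ * y ∈ A (lvG (x⁻¹ * y)) := (hlvGchar _ _).mpr le_rfl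
      have h1 : f x - f y ∈ K (lvG (x⁻¹ * y)) := (hfchar x y _).mp hmem
      have h2 : -(f x) + f y = -(f x - f y) := by abel
      rw [h2]
      exact neg_mem h1
    · apply (hlvGchar _ _).mp
      apply (hfchar x y _).mpr
      have hmem : -(f x) + f y ∈ K (lvH (-(f x) + f y)) := (hlvHchar _ _).mpr le_rfl
      have h2 : f x - f y = -(-(f x) + f y) := by abel
      rw [h2]
      exact neg_mem hmem
  show (lvH (-(f x) + f y) : ℝ) = (lvG (x⁻¹ * y) : ℝ)
  exact_mod_cast congrArg (fun t : ℕ => (t : ℝ)) hnat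
end
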